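/- arXiv:2203.05485 — 3 statements merged into one kernel-verified Lean document; each statement's English description precedes it below -/
import Mathlib

section
/- Let G be a simple graph on n vertices with exactly α·n^{3/2} edges (for some real α > 0). Then G has a spanning subgraph H (a subgraph on the same vertex set) such that e(H) ≥ (1/2)·α·n^{3/2}, and for every edge uv of H, the vertex u has at least (1/8)·α·n^{1/2} neighbours w in H satisfying d_H(v,w) ≥ α²/32, where d_H(v,w) denotes the number of common neighbours of v and w in H. -/
open SimpleGraph

/-- The codegree of `u` and `v` in `H`: the number of common neighbours. -/
noncomputable def codeg {V : Type*} (H : SimpleGraph V) (u v : V) : ℕ :=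
  (H.neighborSet u ∩ H.neighborSet v).ncard

set_option maxHeartbeats 1000000
set_option linter.unusedSectionVars false
set_option linter.unusedVariables false

namespace CleanAux

open Finset

variable {V : Type} [Fintype V]

noncomputable def eN (H : SimpleGraph V) : ℕ := H.edgeSet.ncard

noncomputable def degN (H : SimpleGraph V) (x : V) : ℕ := (H.neighborSet x).ncard

noncomputable def Phi (c' : ℕ) (H : SimpleGraph V) : ℕ :=
  ∑ p : V × V, min (codeg H p.1 p.2) c'

noncomputable def Lpot (D : ℕ) (H : SimpleGraph V) : ℕ :=
  ∑ x : V, min (degN H x) D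

lemma codeg_comm (H : SimpleGraph V) (u v : V) : codeg H u v = codeg H v u := by
  simp [codeg, Set.inter_comm]

lemma codeg_mono {H₁ H₂ : SimpleGraph V} (h : H₁ ≤ H₂) (u v : V) :
    codeg H₁ u v ≤ codeg H₂ u v := by
  refine Set.ncard_le_ncard ?_ (Set.toFinite _)
  rintro x ⟨hx1, hx2⟩
  exact ⟨h hx1, h hx2⟩

lemma degN_mono {H₁ H₂ : SimpleGraph V} (h : H₁ ≤ H₂) (x : V) :
    degN H₁ x ≤ degN H₂ x :=
  Set.ncard_le_ncard (fun y hy => h hy) (Set.toFinite _)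

lemma one_le_codeg {H : SimpleGraph V} {u v w : V} (huv : H.Adj u v) (huw : H.Adj u w) :
    1 ≤ codeg H v w :=
  (Set.ncard_pos (Set.toFinite _)).2 ⟨u, huv.symm, huw.symm⟩

lemma Phi_mono (c' : ℕ) {H₁ H₂ : SimpleGraph V} (h : H₁ ≤ H₂) : Phi c' H₁ ≤ Phi c' H₂ :=
  Finset.sum_le_sum fun p _ => min_le_min (codeg_mono h p.1 p.2) le_rfl

lemma Lpot_mono (D : ℕ) {H₁ H₂ : SimpleGraph V} (h : H₁ ≤ H₂) : Lpot D H₁ ≤ Lpot D H₂ :=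
  Finset.sum_le_sum fun x _ => min_le_min (degN_mono h x) le_rfl

lemma Phi_le (c' : ℕ) (H : SimpleGraph V) : Phi c' H ≤ Fintype.card V * Fintype.card V * c' := by
  calc Phi c' H ≤ ∑ _p : V × V, c' := Finset.sum_le_sum fun p _ => min_le_right _ _
  _ = Fintype.card V * Fintype.card V * c' := by
      simp [Finset.sum_const, Fintype.card_prod, mul_assoc]

lemma Lpot_le (D : ℕ) (H : SimpleGraph V) : Lpot D H ≤ Fintype.card V * D := by
  calc Lpot D H ≤ ∑ _x : V, D := Finset.sum_le_sum fun x _ => min_le_right _ _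
  _ = Fintype.card V * D := by simp [Finset.sum_const]

section delete

variable {H : SimpleGraph V} {u v : V}

lemma eN_delete (huv : H.Adj u v) :
    eN (H.deleteEdges {s(u,v)}) + 1 = eN H := by
  unfold eN
  rw [SimpleGraph.edgeSet_deleteEdges]
  exact Set.ncard_diff_singleton_add_one (by rwa [SimpleGraph.mem_edgeSet]) (Set.toFinite _)

lemma neighborSet_delete_self (huv : H.Adj u v) :
    (H.deleteEdges {s(u,v)}).neighborSet u = H.neighborSet u \ {v} := by
  ext x
  simp only [SimpleGraph.mem_neighborSet, SimpleGraph.deleteEdges_adj, Set.mem_diff,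
    Set.mem_singleton_iff]
  constructor
  · rintro ⟨h1, h2⟩
    refine ⟨h1, fun hx => h2 ?_⟩
    subst hx; rfl
  · rintro ⟨h1, h2⟩
    refine ⟨h1, fun hs => ?_⟩
    rw [Sym2.eq_iff] at hs
    rcases hs with ⟨-, h⟩ | ⟨h1', -⟩
    · exact h2 h
    · exact H.loopless.irrefl u (h1' ▸ huv)

lemma degN_delete (huv : H.Adj u v) :
    degN (H.deleteEdges {s(u,v)}) u + 1 = degN H u := by
  unfold degN
  rw [neighborSet_delete_self huv]
  exact Set.ncard_diff_singleton_add_one (by exact huv) (Set.toFinite _)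

lemma codeg_delete (huv : H.Adj u v) {w : V} (huw : H.Adj u w) (hwv : w ≠ v) :
    codeg (H.deleteEdges {s(u,v)}) v w + 1 = codeg H v w := by
  unfold codeg
  have hvu : v ≠ u := huv.ne'
  have hwu : w ≠ u := huw.ne'
  have hset : (H.deleteEdges {s(u,v)}).neighborSet v ∩ (H.deleteEdges {s(u,v)}).neighborSet w
      = (H.neighborSet v ∩ H.neighborSet w) \ {u} := by
    ext x
    simp only [Set.mem_inter_iff, SimpleGraph.mem_neighborSet, SimpleGraph.deleteEdges_adj,
      Set.mem_diff, Set.mem_singleton_iff]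
    constructor
    · rintro ⟨⟨h1, h2⟩, ⟨h3, h4⟩⟩
      refine ⟨⟨h1, h3⟩, fun hx => h2 ?_⟩
      subst hx
      rw [Sym2.eq_iff]
      right; exact ⟨rfl, rfl⟩
    · rintro ⟨⟨h1, h3⟩, h2⟩
      refine ⟨⟨h1, fun hs => ?_⟩, ⟨h3, fun hs => ?_⟩⟩
      · rw [Sym2.eq_iff] at hs
        rcases hs with ⟨h', -⟩ | ⟨-, h''⟩
        · exact hvu h'
        · exact h2 h''
      · rw [Sym2.eq_iff] at hs
        rcases hs with ⟨h', -⟩ | ⟨h'', -⟩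
        · exact hwu h'
        · exact hwv h''
  rw [hset]
  exact Set.ncard_diff_singleton_add_one ⟨huv.symm, huw.symm⟩ (Set.toFinite _)

end delete


variable {H : SimpleGraph V} {u v : V}

-- new material

lemma sum_le_sum_add_card {ι : Type*} [DecidableEq ι] {s T : Finset ι} (hT : T ⊆ s)
    {f g : ι → ℕ} (h1 : ∀ i ∈ s, f i ≤ g i) (h2 : ∀ i ∈ T, f i + 1 ≤ g i) :
    ∑ i ∈ s, f i + T.card ≤ ∑ i ∈ s, g i := by
  rw [← Finset.sum_sdiff hT (f := f), ← Finset.sum_sdiff hT (f := g)]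
  have e1 : ∑ i ∈ T, f i + T.card = ∑ i ∈ T, (f i + 1) := by
    rw [Finset.sum_add_distrib, Finset.sum_const, smul_eq_mul, mul_one]
  have h3 : ∑ i ∈ T, (f i + 1) ≤ ∑ i ∈ T, g i := Finset.sum_le_sum h2
  have h4 : ∑ i ∈ s \ T, f i ≤ ∑ i ∈ s \ T, g i :=
    Finset.sum_le_sum fun i hi => h1 i (Finset.mem_sdiff.1 hi).1
  omega

lemma Lpot_drop (D : ℕ) (huv : H.Adj u v) (hdeg : degN H u ≤ D) :
    Lpot D (H.deleteEdges {s(u,v)}) + 1 ≤ Lpot D H := by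
  classical
  have hle : H.deleteEdges {s(u,v)} ≤ H := SimpleGraph.deleteEdges_le _
  have hstep : ∀ x : V, min (degN (H.deleteEdges {s(u,v)}) x) D ≤ min (degN H x) D :=
    fun x => min_le_min (degN_mono hle x) le_rfl
  have hu : min (degN (H.deleteEdges {s(u,v)}) u) D + 1 ≤ min (degN H u) D := by
    have := degN_delete huv
    have h1 : min (degN (H.deleteEdges {s(u,v)}) u) D = degN (H.deleteEdges {s(u,v)}) u :=
      min_eq_left (by omega)
    have h2 : min (degN H u) D = degN H u := min_eq_left hdeg
    omega
  unfold Lpot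
  have : Lpot D (H.deleteEdges {s(u,v)}) + ({u} : Finset V).card ≤ Lpot D H := by
    apply sum_le_sum_add_card (Finset.subset_univ _) (fun x _ => hstep x)
    intro i hi
    rw [Finset.mem_singleton] at hi
    subst hi
    exact hu
  simpa [Lpot] using this

lemma Phi_drop (c' : ℕ) (huv : H.Adj u v) :
    Phi c' (H.deleteEdges {s(u,v)})
      + 2 * ({w : V | H.Adj u w ∧ w ≠ v ∧ codeg H v w < c'} : Set V).ncard
      ≤ Phi c' H := by
  classical
  set H₂ := H.deleteEdges {s(u,v)} with hH₂
  have hle : H₂ ≤ H := SimpleGraph.deleteEdges_le _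
  set S : Set V := {w : V | H.Adj u w ∧ w ≠ v ∧ codeg H v w < c'} with hS
  set Sf : Finset V := S.toFinite.toFinset with hSf
  have hmemSf : ∀ w, w ∈ Sf ↔ (H.Adj u w ∧ w ≠ v ∧ codeg H v w < c') := by
    intro w; rw [hSf, Set.Finite.mem_toFinset]; rfl
  set T : Finset (V × V) :=
    Sf.image (fun w => ((v, w) : V × V)) ∪ Sf.image (fun w => ((w, v) : V × V)) with hT
  have hTcard : T.card = 2 * Sf.card := by
    rw [hT, Finset.card_union_of_disjoint, Finset.card_image_of_injective,
      Finset.card_image_of_injective]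
    · omega
    · intro a b hab; exact (Prod.mk.injEq _ _ _ _ ▸ hab).1
    · intro a b hab; exact (Prod.mk.injEq _ _ _ _ ▸ hab).2
    · rw [Finset.disjoint_left]
      rintro p hp1 hp2
      simp only [Finset.mem_image] at hp1 hp2
      obtain ⟨a, ha, rfl⟩ := hp1
      obtain ⟨b, hb, hpb⟩ := hp2
      have : b = v := (Prod.mk.injEq _ _ _ _ ▸ hpb).1
      have hav : a = v := ((Prod.mk.injEq _ _ _ _ ▸ hpb).2).symm
      exact ((hmemSf a).1 ha).2.1 hav
  have hdropw : ∀ w ∈ Sf, min (codeg H₂ v w) c' + 1 ≤ min (codeg H v w) c' := by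
    intro w hw
    obtain ⟨huw, hwv, hcw⟩ := (hmemSf w).1 hw
    have hdel := codeg_delete huv huw hwv
    rw [← hH₂] at hdel
    have h2 : min (codeg H v w) c' = codeg H v w := min_eq_left (le_of_lt hcw)
    have h1 : min (codeg H₂ v w) c' ≤ codeg H₂ v w := min_le_left _ _
    omega
  have key : Phi c' H₂ + T.card ≤ Phi c' H := by
    apply sum_le_sum_add_card (Finset.subset_univ _)
    · intro p _
      exact min_le_min (codeg_mono hle p.1 p.2) le_rfl
    · intro p hp
      rw [hT, Finset.mem_union] at hp
      rcases hp with hp | hp <;> simp only [Finset.mem_image] at hp <;>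
        obtain ⟨w, hw, rfl⟩ := hp
      · exact hdropw w hw
      · simpa only [codeg_comm H₂ w v, codeg_comm H w v] using hdropw w hw
  have hScard : S.ncard = Sf.card := by
    rw [hSf]; exact Set.ncard_eq_toFinset_card' S ▸ (by simp [Set.toFinite_toFinset, Set.toFinset_setOf]; rfl)
  omega


/-- The stability predicate matching the theorem's conclusion. -/
def Stable (βr cr : ℝ) (H : SimpleGraph V) : Prop :=
  ∀ u v : V, H.Adj u v →
    βr ≤ (({w : V | H.Adj u w ∧ cr ≤ (codeg H v w : ℝ)}).ncard : ℝ)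

lemma main_ind (G : SimpleGraph V) (βr cr : ℝ) (c' D₀ A : ℕ)
    (Hdrop : ∀ H : SimpleGraph V, H ≤ G → ∀ u v : V, H.Adj u v →
      ¬ (βr ≤ (({w : V | H.Adj u w ∧ cr ≤ (codeg H v w : ℝ)}).ncard : ℝ)) →
      D₀ + 1 ≤ degN H u →
      Phi c' (H.deleteEdges {s(u,v)}) + A ≤ Phi c' H) :
    ∀ m : ℕ, ∀ H : SimpleGraph V, H ≤ G → eN H ≤ m →
      ∃ H' : SimpleGraph V, H' ≤ H ∧ Stable βr cr H' ∧
        (A : ℝ) * eN H + Phi c' H' + A * Lpot D₀ H' ≤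
          (A : ℝ) * eN H' + Phi c' H + A * Lpot D₀ H := by
  intro m
  induction m with
  | zero =>
    intro H hHG he
    refine ⟨H, le_refl H, ?_, le_refl _⟩
    intro u v hadj
    exfalso
    have : 0 < eN H := (Set.ncard_pos (Set.toFinite _)).2 ⟨s(u,v), hadj⟩
    omega
  | succ m ih =>
    intro H hHG he
    by_cases hstab : Stable βr cr H
    · exact ⟨H, le_refl H, hstab, le_refl _⟩
    · rw [Stable] at hstab
      push_neg at hstab
      obtain ⟨u, v, hadj, hbad⟩ := hstab
      set H₂ := H.deleteEdges {s(u,v)} with hH₂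
      have hle2 : H₂ ≤ H := SimpleGraph.deleteEdges_le _
      have hE : eN H₂ + 1 = eN H := eN_delete hadj
      have hE2 : eN H₂ ≤ m := by omega
      obtain ⟨H', hH'le, hstable, hineq⟩ := ih H₂ (hle2.trans hHG) hE2
      refine ⟨H', hH'le.trans hle2, hstable, ?_⟩
      have hEr : (eN H : ℝ) = (eN H₂ : ℝ) + 1 := by exact_mod_cast hE.symm
      by_cases hdeg : degN H u ≤ D₀
      · -- type B : low degree endpoint
        have hL : (Lpot D₀ H₂ : ℝ) + 1 ≤ (Lpot D₀ H : ℝ) := by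
          exact_mod_cast Lpot_drop D₀ hadj hdeg
        have hP : (Phi c' H₂ : ℝ) ≤ (Phi c' H : ℝ) := by exact_mod_cast Phi_mono c' hle2
        have hLmul : (A : ℝ) * ((Lpot D₀ H₂ : ℝ) + 1) ≤ (A : ℝ) * (Lpot D₀ H : ℝ) :=
          mul_le_mul_of_nonneg_left hL (by positivity)
        nlinarith [hineq]
      · -- type A : high degree endpoint
        push_neg at hdeg
        have hPd : (Phi c' H₂ : ℝ) + A ≤ (Phi c' H : ℝ) := by
          have := Hdrop H hHG u v hadj (by exact fun h => (not_le.mpr hbad) h) hdeg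
          exact_mod_cast this
        have hLm : (Lpot D₀ H₂ : ℝ) ≤ (Lpot D₀ H : ℝ) := by
          exact_mod_cast Finset.sum_le_sum
            (fun x _ => min_le_min ((Set.ncard_le_ncard (fun y hy => hle2 hy) (Set.toFinite _))) le_rfl)
        have hLmul : (A : ℝ) * (Lpot D₀ H₂ : ℝ) ≤ (A : ℝ) * (Lpot D₀ H : ℝ) :=
          mul_le_mul_of_nonneg_left hLm (by positivity)
        nlinarith [hineq]


lemma eN_le_sq (G : SimpleGraph V) : (eN G : ℝ) ≤ (Fintype.card V : ℝ)^2 / 2 := by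
  classical
  have h1 : eN G = G.edgeFinset.card := by
    rw [eN, ← Set.ncard_coe_finset, SimpleGraph.coe_edgeFinset]
  have h2 : G.edgeFinset.card ≤ (Fintype.card V).choose 2 :=
    SimpleGraph.card_edgeFinset_le_card_choose_two
  have h3 : (Fintype.card V).choose 2 = Fintype.card V * (Fintype.card V - 1) / 2 :=
    Nat.choose_two_right _
  have h4 : 2 * eN G ≤ Fintype.card V * Fintype.card V := by
    have := Nat.div_mul_le_self (Fintype.card V * (Fintype.card V - 1)) 2
    have h5 : Fintype.card V * (Fintype.card V - 1) ≤ Fintype.card V * Fintype.card V :=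
      Nat.mul_le_mul_left _ (Nat.sub_le _ _)
    have h6 : eN G ≤ Fintype.card V * (Fintype.card V - 1) / 2 := by omega
    have h7 := Nat.div_mul_le_self (Fintype.card V * (Fintype.card V - 1)) 2
    omega
  have : (2 : ℝ) * eN G ≤ (Fintype.card V : ℝ) * Fintype.card V := by exact_mod_cast h4
  nlinarith

end CleanAux

open CleanAux in
/-- Lemma 2.2: if `G` is an `n`-vertex graph with exactly `α · n^{3/2}` edges,
then `G` has a spanning subgraph `H` with `e(H) ≥ (1/2) α n^{3/2}` such that for
every edge `uv` of `H`, `u` has at least `(1/8) α n^{1/2}` neighbours `w` in `H`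
with codegree `d_H(v,w) ≥ α²/32`. -/
theorem cleaned_subgraph (V : Type) [Fintype V] (n : ℕ) (hn : Fintype.card V = n)
    (α : ℝ) (hα : 0 < α) (G : SimpleGraph V)
    (hG : (G.edgeSet.ncard : ℝ) = α * (n : ℝ) ^ ((3 : ℝ) / 2)) :
    ∃ H : SimpleGraph V, H ≤ G ∧
      (1 / 2) * α * (n : ℝ) ^ ((3 : ℝ) / 2) ≤ (H.edgeSet.ncard : ℝ) ∧
      ∀ u v : V, H.Adj u v →
        (1 / 8) * α * (n : ℝ) ^ ((1 : ℝ) / 2) ≤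
          (({w : V | H.Adj u w ∧ α ^ 2 / 32 ≤ (codeg H v w : ℝ)}).ncard : ℝ) := by
  classical
  by_cases hn0 : n = 0
  · subst hn0
    have hV : IsEmpty V := Fintype.card_eq_zero_iff.mp hn
    refine ⟨G, le_refl G, ?_, ?_⟩
    · have h32 : ((0 : ℕ) : ℝ) ^ ((3 : ℝ) / 2) = 0 := by
        rw [Nat.cast_zero]; exact Real.zero_rpow (by norm_num)
      rw [h32]
      simp only [mul_zero]
      positivity
    · intro u; exact hV.elim u
  -- main case
  have hn1 : 1 ≤ n := Nat.one_le_iff_ne_zero.2 hn0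
  have hN1 : (1 : ℝ) ≤ (n : ℝ) := by exact_mod_cast hn1
  set N : ℝ := (n : ℝ) with hNdef
  set r : ℝ := N ^ ((1 : ℝ) / 2) with hrdef
  have hr0 : 0 < r := Real.rpow_pos_of_pos (by linarith) _
  have hr2 : r ^ 2 = N := by
    rw [hrdef, ← Real.rpow_natCast (N ^ ((1 : ℝ) / 2)) 2, ← Real.rpow_mul (by linarith)]
    norm_num
  have hr3 : N ^ ((3 : ℝ) / 2) = r ^ 3 := by
    rw [hrdef, ← Real.rpow_natCast (N ^ ((1 : ℝ) / 2)) 3, ← Real.rpow_mul (by linarith)]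
    norm_num
  have hEG : (eN G : ℝ) = α * r ^ 3 := by rw [← hr3]; exact hG
  set βr : ℝ := 1 / 8 * α * r with hβdef
  set cr : ℝ := α ^ 2 / 32 with hcrdef
  have hβpos : 0 < βr := by rw [hβdef]; positivity
  have hceil1 : 1 ≤ ⌈βr⌉₊ := Nat.one_le_ceil_iff.2 hβpos
  have hNn : Fintype.card V = n := hn
  by_cases hcase : α ^ 2 / 32 ≤ 1
  · -- small α : the codegree condition is free, only degrees matter
    set D₀ : ℕ := ⌈βr⌉₊ - 1 with hD₀def
    have Hdrop : ∀ H : SimpleGraph V, H ≤ G → ∀ u v : V, H.Adj u v →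
        ¬ (βr ≤ (({w : V | H.Adj u w ∧ cr ≤ (codeg H v w : ℝ)}).ncard : ℝ)) →
        D₀ + 1 ≤ degN H u →
        Phi 0 (H.deleteEdges {s(u,v)}) + 1 ≤ Phi 0 H := by
      intro H hHG u v hadj hbad hdeg
      exfalso
      have hset : {w : V | H.Adj u w ∧ cr ≤ (codeg H v w : ℝ)} = H.neighborSet u := by
        ext w
        simp only [Set.mem_setOf_eq, SimpleGraph.mem_neighborSet]
        refine ⟨fun h => h.1, fun h => ⟨h, ?_⟩⟩
        have h1 : 1 ≤ codeg H v w := one_le_codeg hadj h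
        have : (1 : ℝ) ≤ (codeg H v w : ℝ) := by exact_mod_cast h1
        rw [hcrdef]; linarith
      rw [hset] at hbad
      have hd : (degN H u : ℝ) < βr := not_le.mp (by exact hbad)
      have : degN H u < ⌈βr⌉₊ := Nat.lt_ceil.2 hd
      omega
    obtain ⟨H', hH'le, hstable, hineq⟩ :=
      main_ind G βr cr 0 D₀ 1 Hdrop (eN G) G (le_refl G) (le_refl _)
    refine ⟨H', hH'le, ?_, hstable⟩
    have hPhiG : Phi 0 G = 0 := Nat.le_zero.1 (by simpa using Phi_le 0 G)
    have hLG : (Lpot D₀ G : ℝ) ≤ N * D₀ := by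
      have h0 := Lpot_le D₀ G
      rw [hNn] at h0
      rw [hNdef]
      exact_mod_cast h0
    have hD₀le : (D₀ : ℝ) ≤ βr := by
      have h1 : ((⌈βr⌉₊ : ℝ)) < βr + 1 := Nat.ceil_lt_add_one hβpos.le
      have h2 : ((D₀ : ℕ) : ℝ) = (⌈βr⌉₊ : ℝ) - 1 := by
        rw [hD₀def]; push_cast [Nat.cast_sub hceil1]; ring
      linarith
    have hPhiH' : (0 : ℝ) ≤ (Phi 0 H' : ℝ) := Nat.cast_nonneg _
    have hLH' : (0 : ℝ) ≤ (Lpot D₀ H' : ℝ) := Nat.cast_nonneg _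
    have hkey : (eN G : ℝ) ≤ (eN H' : ℝ) + N * βr := by
      rw [hPhiG] at hineq
      push_cast at hineq
      nlinarith [mul_le_mul_of_nonneg_left hD₀le (by positivity : (0:ℝ) ≤ N), hLG]
    rw [hr3]
    have : (1 : ℝ) / 2 * α * r ^ 3 ≤ (eN H' : ℝ) := by
      rw [hβdef] at hkey
      nlinarith [hr0, hα, hr2]
    exact this
  · -- large α
    push_neg at hcase
    have hα32 : 32 < α ^ 2 := by nlinarith
    set x : ℝ := α * r with hxdef
    have hβx : βr = x / 8 := by rw [hβdef, hxdef]; ring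
    have hEle : (eN G : ℝ) ≤ N ^ 2 / 2 := by
      have := eN_le_sq G
      rwa [hNn] at this
    have hx64 : 64 ≤ x := by
      -- α r^3 = eN G ≤ N²/2 = r⁴/2 so α ≤ r/2, x = αr ≥ 2α² > 64
      have hN4 : N ^ 2 = r ^ 4 := by rw [← hr2]; ring
      have h1 : α * r ^ 3 ≤ r ^ 4 / 2 := by
        rw [← hEG, ← hN4]; exact hEle
      have h3 : (0:ℝ) < r ^ 3 := by positivity
      have h2 : α ≤ r / 2 := by
        have := le_of_mul_le_mul_right (by linarith : α * r ^ 3 ≤ (r / 2) * r ^ 3) h3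
        exact this
      have h4 : α * (2 * α) ≤ α * r := mul_le_mul_of_nonneg_left (by linarith) hα.le
      rw [hxdef]
      nlinarith [hα32]
    set c' : ℕ := ⌈cr⌉₊ with hc'def
    set B₀ : ℕ := ⌈βr⌉₊ - 1 with hB₀def
    set D₀ : ℕ := ⌈3 * x / 10⌉₊ with hD₀def
    have hxpos : 0 < x := by linarith
    have hB₀le : (B₀ : ℝ) ≤ x / 8 := by
      have h1 : ((⌈βr⌉₊ : ℝ)) < βr + 1 := Nat.ceil_lt_add_one hβpos.le
      have h2 : ((B₀ : ℕ) : ℝ) = (⌈βr⌉₊ : ℝ) - 1 := by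
        rw [hB₀def]; push_cast [Nat.cast_sub hceil1]; ring
      rw [← hβx]; linarith
    have hD₀l : 3 * x / 10 ≤ (D₀ : ℝ) := by rw [hD₀def]; exact Nat.le_ceil _
    have hD₀u : (D₀ : ℝ) ≤ 3 * x / 10 + 1 := by
      rw [hD₀def]; exact (Nat.ceil_lt_add_one (by positivity)).le
    have hBD : B₀ < D₀ := by
      have : (B₀ : ℝ) < (D₀ : ℝ) := by linarith
      exact_mod_cast this
    set A : ℕ := 2 * (D₀ - B₀) with hAdef
    have hA : (A : ℝ) = 2 * ((D₀ : ℝ) - (B₀ : ℝ)) := by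
      rw [hAdef]; push_cast [Nat.cast_sub hBD.le]; ring
    have hApos : (0 : ℝ) < (A : ℝ) := by
      rw [hA]
      have : (B₀ : ℝ) < (D₀ : ℝ) := by exact_mod_cast hBD
      linarith
    have hc'u : (c' : ℝ) ≤ α ^ 2 / 16 := by
      have h1 : ((c' : ℕ) : ℝ) < cr + 1 := by
        rw [hc'def]; exact Nat.ceil_lt_add_one (by rw [hcrdef]; positivity)
      rw [hcrdef] at h1
      nlinarith
    have Hdrop : ∀ H : SimpleGraph V, H ≤ G → ∀ u v : V, H.Adj u v →
        ¬ (βr ≤ (({w : V | H.Adj u w ∧ cr ≤ (codeg H v w : ℝ)}).ncard : ℝ)) →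
        D₀ + 1 ≤ degN H u →
        Phi c' (H.deleteEdges {s(u,v)}) + A ≤ Phi c' H := by
      intro H hHG u v hadj hbad hdeg
      set Sg : Set V := {w : V | H.Adj u w ∧ cr ≤ (codeg H v w : ℝ)} with hSgdef
      have hgood : Sg.ncard ≤ B₀ := by
        have h1 : (Sg.ncard : ℝ) < βr := not_le.mp hbad
        have h2 : Sg.ncard < ⌈βr⌉₊ := Nat.lt_ceil.2 h1
        omega
      set S : Set V := {w : V | H.Adj u w ∧ w ≠ v ∧ codeg H v w < c'} with hSdef
      have hsub : H.neighborSet u ⊆ S ∪ ({v} : Set V) ∪ Sg := by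
        intro w hw
        rw [SimpleGraph.mem_neighborSet] at hw
        by_cases h1 : w = v
        · exact Or.inl (Or.inr h1)
        by_cases h2 : cr ≤ (codeg H v w : ℝ)
        · exact Or.inr ⟨hw, h2⟩
        · refine Or.inl (Or.inl ⟨hw, h1, ?_⟩)
          push_neg at h2
          exact Nat.lt_ceil.2 h2
      have hcard : degN H u ≤ S.ncard + 1 + B₀ := by
        have h1 : degN H u ≤ (S ∪ ({v} : Set V) ∪ Sg).ncard :=
          Set.ncard_le_ncard hsub (Set.toFinite _)
        have h2 := Set.ncard_union_le (S ∪ ({v} : Set V)) Sg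
        have h3 := Set.ncard_union_le S ({v} : Set V)
        have h4 : ({v} : Set V).ncard = 1 := Set.ncard_singleton v
        omega
      have hk := Phi_drop (u := u) (v := v) (H := H) c' hadj
      rw [← hSdef] at hk
      have hA2 : A ≤ 2 * S.ncard := by rw [hAdef]; omega
      omega
    obtain ⟨H', hH'le, hstable, hineq⟩ :=
      main_ind G βr cr c' D₀ A Hdrop (eN G) G (le_refl G) (le_refl _)
    refine ⟨H', hH'le, ?_, hstable⟩
    have hPhiG : (Phi c' G : ℝ) ≤ N * N * (α ^ 2 / 16) := by
      have h1 := Phi_le c' G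
      rw [hNn] at h1
      have h2 : (Phi c' G : ℝ) ≤ N * N * (c' : ℝ) := by rw [hNdef]; exact_mod_cast h1
      have h3 : N * N * (c' : ℝ) ≤ N * N * (α ^ 2 / 16) :=
        mul_le_mul_of_nonneg_left hc'u (by positivity)
      linarith
    have hLG : (Lpot D₀ G : ℝ) ≤ N * (3 * x / 10 + 1) := by
      have h1 := Lpot_le D₀ G
      rw [hNn] at h1
      have h2 : (Lpot D₀ G : ℝ) ≤ N * (D₀ : ℝ) := by rw [hNdef]; exact_mod_cast h1
      have h3 : N * (D₀ : ℝ) ≤ N * (3 * x / 10 + 1) :=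
        mul_le_mul_of_nonneg_left hD₀u (by positivity)
      linarith
    have hPhiH' : (0 : ℝ) ≤ (Phi c' H' : ℝ) := Nat.cast_nonneg _
    have hLH' : (0 : ℝ) ≤ (Lpot D₀ H' : ℝ) := Nat.cast_nonneg _
    have hmain : (A : ℝ) * (α * r ^ 3) ≤
        (A : ℝ) * (eN H' : ℝ) + N * N * (α ^ 2 / 16) + (A : ℝ) * (N * (3 * x / 10 + 1)) := by
      have h1 : (A : ℝ) * (Lpot D₀ G : ℝ) ≤ (A : ℝ) * (N * (3 * x / 10 + 1)) :=
        mul_le_mul_of_nonneg_left hLG hApos.le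
      have h2 : (A : ℝ) * (Lpot D₀ H' : ℝ) ≥ 0 := by positivity
      rw [hEG] at hineq
      linarith [hineq, hPhiG, hPhiH']
    have hAlb : 7 * x / 20 ≤ (A : ℝ) := by rw [hA]; linarith
    have hkey : x ^ 2 / 16 ≤ (A : ℝ) * (x / 5 - 1) := by
      have e2 : (0 : ℝ) ≤ x / 5 - 1 := by linarith
      have e3 : 7 * x / 20 * (x / 5 - 1) ≤ (A : ℝ) * (x / 5 - 1) :=
        mul_le_mul_of_nonneg_right hAlb e2
      nlinarith [hx64]
    have hkey2 : x ^ 2 / 16 * r ^ 2 ≤ (A : ℝ) * (x / 5 - 1) * r ^ 2 :=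
      mul_le_mul_of_nonneg_right hkey (by positivity)
    have hxr : x ^ 2 * r ^ 2 = α ^ 2 * r ^ 4 := by rw [hxdef]; ring
    have hxr2 : x * r ^ 2 = α * r ^ 3 := by rw [hxdef]; ring
    have hxr3 : (A : ℝ) * (x * r ^ 2) = (A : ℝ) * (α * r ^ 3) := by rw [hxr2]
    have hNr : N = r ^ 2 := hr2.symm
    rw [hNr] at hmain
    have hdiv : (A : ℝ) * (x * r ^ 2 / 2) ≤ (A : ℝ) * (eN H' : ℝ) := by
      linarith [hmain, hkey2, hxr, hxr3]
    have hfin : x * r ^ 2 / 2 ≤ (eN H' : ℝ) := le_of_mul_le_mul_left hdiv hApos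
    rw [hr3]
    have hxr2 : x * r ^ 2 = α * r ^ 3 := by rw [hxdef]; ring
    have : 1 / 2 * α * r ^ 3 ≤ (eN H' : ℝ) := by linarith [hxr2 ▸ hfin]
    exact this
end

section
/- Let α ≥ 10 be a real number and let n be a sufficiently large positive integer. Let G be a simple graph on n vertices with at least α·n^{3/2} edges. Then G has a subgraph H on m ≥ n^{1/12} vertices such that for some real α' ≥ α/20 the following hold: e(H) ≥ α'·m^{3/2}; the maximum degree satisfies Δ(H) ≤ 12000·α'·m^{1/2}; and for every edge uv of H, the vertex u has at least α'·m^{1/2} neighbours w in H satisfying d_H(v,w) ≥ α'. -/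
set_option linter.unusedSectionVars false
set_option linter.unusedVariables false
set_option maxHeartbeats 2000000

open SimpleGraph

open Finset
open scoped Classical

namespace FC

variable {V : Type} [Fintype V] [DecidableEq V]

noncomputable def nb (H : SimpleGraph V) (v : V) : Finset V :=
  univ.filter fun w => H.Adj v w

lemma mem_nb {H : SimpleGraph V} {v w : V} : w ∈ nb H v ↔ H.Adj v w := by
  simp [nb]

noncomputable def dg (H : SimpleGraph V) (v : V) : ℕ := (nb H v).card

noncomputable def EC (H : SimpleGraph V) : ℕ := ∑ v, dg H v

noncomputable def cdg (H : SimpleGraph V) (v w : V) : ℕ := (nb H v ∩ nb H w).card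

lemma dg_def (H : SimpleGraph V) (v : V) : dg H v = (nb H v).card := rfl

def rG (H : SimpleGraph V) (S : Finset V) : SimpleGraph V where
  Adj a b := H.Adj a b ∧ a ∈ S ∧ b ∈ S
  symm := ⟨fun a b h => ⟨h.1.symm, h.2.2, h.2.1⟩⟩
  loopless := ⟨fun a h => H.loopless.irrefl a h.1⟩

def dE (H : SimpleGraph V) (u v : V) : SimpleGraph V where
  Adj a b := H.Adj a b ∧ ¬(a = u ∧ b = v) ∧ ¬(a = v ∧ b = u)
  symm := ⟨fun a b h => ⟨h.1.symm, fun hh => h.2.2 ⟨hh.2, hh.1⟩, fun hh => h.2.1 ⟨hh.2, hh.1⟩⟩⟩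
  loopless := ⟨fun a h => H.loopless.irrefl a h.1⟩

lemma rG_le (H : SimpleGraph V) (S : Finset V) : rG H S ≤ H := fun _ _ h => h.1

lemma dE_le (H : SimpleGraph V) (u v : V) : dE H u v ≤ H := fun _ _ h => h.1

lemma rG_mono (H : SimpleGraph V) {S T : Finset V} (hST : S ⊆ T) :
    rG H S ≤ rG H T := fun _ _ h => ⟨h.1, hST h.2.1, hST h.2.2⟩

lemma rG_edges_in (H : SimpleGraph V) (S : Finset V) {a b : V}
    (h : (rG H S).Adj a b) : a ∈ S ∧ b ∈ S := h.2

lemma nb_mono {H H' : SimpleGraph V} (h : H ≤ H') (v : V) : nb H v ⊆ nb H' v := by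
  intro w hw; rw [mem_nb] at *; exact h hw

lemma dg_mono {H H' : SimpleGraph V} (h : H ≤ H') (v : V) : dg H v ≤ dg H' v :=
  card_le_card (nb_mono h v)

lemma EC_mono {H H' : SimpleGraph V} (h : H ≤ H') : EC H ≤ EC H' :=
  Finset.sum_le_sum fun v _ => dg_mono h v

lemma cdg_mono {H H' : SimpleGraph V} (h : H ≤ H') (v w : V) :
    cdg H v w ≤ cdg H' v w :=
  card_le_card (inter_subset_inter (nb_mono h v) (nb_mono h w))

lemma cdg_comm (H : SimpleGraph V) (v w : V) : cdg H v w = cdg H w v := by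
  rw [cdg, cdg, inter_comm]

lemma nb_rG (H : SimpleGraph V) (S : Finset V) (v : V) :
    nb (rG H S) v = if v ∈ S then nb H v ∩ S else ∅ := by
  split_ifs with hv
  · ext w; simp [mem_nb, rG, hv]
  · ext w; simp only [mem_nb, notMem_empty, iff_false]
    rintro ⟨-, hv', -⟩; exact hv hv'

lemma dg_rG_eq (H : SimpleGraph V) (S : Finset V) {v : V} (hv : v ∈ S) :
    dg (rG H S) v = (nb H v ∩ S).card := by
  rw [dg, nb_rG, if_pos hv]

lemma dg_rG_zero (H : SimpleGraph V) (S : Finset V) {v : V} (hv : v ∉ S) :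
    dg (rG H S) v = 0 := by
  rw [dg, nb_rG, if_neg hv, card_empty]

lemma EC_rG (H : SimpleGraph V) (S : Finset V) :
    EC (rG H S) = ∑ v ∈ S, (nb H v ∩ S).card := by
  rw [EC]
  rw [← Finset.sum_subset (subset_univ S) (fun v _ hv => dg_rG_zero H S hv)]
  exact Finset.sum_congr rfl fun v hv => dg_rG_eq H S hv

lemma EC_rG_le_sq (H : SimpleGraph V) (S : Finset V) :
    EC (rG H S) ≤ S.card * S.card := by
  rw [EC_rG]
  calc ∑ v ∈ S, (nb H v ∩ S).card ≤ ∑ _v ∈ S, S.card :=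
        Finset.sum_le_sum fun v _ => card_le_card inter_subset_right
    _ = S.card * S.card := by rw [Finset.sum_const, smul_eq_mul]

lemma edge_mem_of_adj {H : SimpleGraph V} {A : Finset V}
    (hin : ∀ a b, H.Adj a b → a ∈ A ∧ b ∈ A) : H ≤ rG H A :=
  fun _ _ h => ⟨h, (hin _ _ h).1, (hin _ _ h).2⟩

lemma EC_pos_of_adj {H : SimpleGraph V} {u v : V} (h : H.Adj u v) :
    2 ≤ EC H := by
  have hu : 1 ≤ dg H u := card_pos.2 ⟨v, mem_nb.2 h⟩
  have hv : 1 ≤ dg H v := card_pos.2 ⟨u, mem_nb.2 h.symm⟩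
  have hne : u ≠ v := h.ne
  calc 2 = 1 + 1 := rfl
    _ ≤ dg H u + dg H v := Nat.add_le_add hu hv
    _ ≤ EC H := by
        rw [EC]
        rw [← Finset.sum_pair hne]
        exact Finset.sum_le_sum_of_subset (subset_univ _)

lemma adj_of_EC_pos {H : SimpleGraph V} (h : 0 < EC H) : ∃ u v, H.Adj u v := by
  by_contra hc
  push_neg at hc
  have : EC H = 0 := by
    rw [EC]
    refine Finset.sum_eq_zero fun v _ => ?_
    rw [dg, card_eq_zero]
    ext w
    simp only [mem_nb, notMem_empty, iff_false]
    exact hc v w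
  omega

lemma card_pairs (A B : Finset V) (P : V → V → Prop) :
    ((A ×ˢ B).filter fun p => P p.1 p.2).card = ∑ a ∈ A, (B.filter fun b => P a b).card := by
  have he : (A ×ˢ B).filter (fun p => P p.1 p.2)
      = A.biUnion (fun a => (B.filter fun b => P a b).image fun b => (a, b)) := by
    ext ⟨x, y⟩
    simp only [mem_filter, mem_product, mem_biUnion, mem_image]
    constructor
    · rintro ⟨⟨hx, hy⟩, hp⟩
      exact ⟨x, hx, y, ⟨hy, hp⟩, rfl⟩
    · rintro ⟨a, ha, b, ⟨hb, hp⟩, heq⟩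
      rw [Prod.mk.injEq] at heq
      obtain ⟨rfl, rfl⟩ := heq
      exact ⟨⟨ha, hb⟩, hp⟩
  rw [he, card_biUnion]
  · refine Finset.sum_congr rfl fun a _ => card_image_of_injective _ ?_
    intro b c h
    rw [Prod.mk.injEq] at h
    exact h.2
  · intro a _ a' _ hne
    simp only [Finset.disjoint_left, mem_image]
    rintro ⟨x, y⟩ ⟨b, hb, heq⟩ ⟨c, hc, heq'⟩
    rw [Prod.mk.injEq] at heq heq'
    exact hne (heq.1.trans heq'.1.symm)


lemma EC_pairs (H : SimpleGraph V) :
    EC H = ((univ ×ˢ univ).filter fun p : V × V => H.Adj p.1 p.2).card := by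
  rw [card_pairs]
  rfl

lemma nb_inter_eq_filter (H : SimpleGraph V) (a : V) (B : Finset V) :
    nb H a ∩ B = B.filter fun b => H.Adj a b := by
  ext w
  simp [mem_nb, nb, and_comm]

lemma sum_nb_comm (H : SimpleGraph V) (A B : Finset V) :
    ∑ a ∈ A, (nb H a ∩ B).card = ∑ b ∈ B, (nb H b ∩ A).card := by
  have h1 : ∀ (C D : Finset V), ∑ a ∈ C, (nb H a ∩ D).card
      = ((C ×ˢ D).filter fun p : V × V => H.Adj p.1 p.2).card := by
    intro C D
    rw [card_pairs]
    exact Finset.sum_congr rfl fun a _ => by rw [nb_inter_eq_filter]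
  rw [h1, h1]
  apply Finset.card_bij (fun p _ => Prod.swap p)
  · rintro ⟨x, y⟩ hp
    simp only [mem_filter, mem_product, Prod.swap] at hp ⊢
    exact ⟨⟨hp.1.2, hp.1.1⟩, hp.2.symm⟩
  · rintro ⟨x, y⟩ hx ⟨x', y'⟩ hy h
    simp only [Prod.swap, Prod.mk.injEq] at h
    simp [Prod.mk.injEq, h.1, h.2]
  · rintro ⟨x, y⟩ hp
    refine ⟨⟨y, x⟩, ?_, rfl⟩
    simp only [mem_filter, mem_product] at hp ⊢
    exact ⟨⟨hp.1.2, hp.1.1⟩, hp.2.symm⟩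

lemma EC_rG_split (H : SimpleGraph V) {A B : Finset V} (hd : Disjoint A B) :
    EC (rG H (A ∪ B)) = EC (rG H A) + EC (rG H B) + 2 * ∑ a ∈ A, (nb H a ∩ B).card := by
  rw [EC_rG, EC_rG, EC_rG, Finset.sum_union hd]
  have hsplit : ∀ v : V, (nb H v ∩ (A ∪ B)).card = (nb H v ∩ A).card + (nb H v ∩ B).card := by
    intro v
    rw [inter_union_distrib_left]
    exact card_union_of_disjoint (hd.mono inter_subset_right inter_subset_right)
  have hA : ∑ v ∈ A, (nb H v ∩ (A ∪ B)).card
      = ∑ v ∈ A, (nb H v ∩ A).card + ∑ v ∈ A, (nb H v ∩ B).card := by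
    rw [← Finset.sum_add_distrib]
    exact Finset.sum_congr rfl fun v _ => hsplit v
  have hB : ∑ v ∈ B, (nb H v ∩ (A ∪ B)).card
      = ∑ v ∈ B, (nb H v ∩ A).card + ∑ v ∈ B, (nb H v ∩ B).card := by
    rw [← Finset.sum_add_distrib]
    exact Finset.sum_congr rfl fun v _ => hsplit v
  rw [hA, hB, sum_nb_comm H B A]
  ring


lemma adj_dE {H : SimpleGraph V} {u v a b : V} :
    (dE H u v).Adj a b ↔ H.Adj a b ∧ ¬(a = u ∧ b = v) ∧ ¬(a = v ∧ b = u) := Iff.rfl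

lemma EC_dE {H : SimpleGraph V} {u v : V} (huv : H.Adj u v) :
    EC (dE H u v) + 2 = EC H := by
  have hne : u ≠ v := huv.ne
  rw [EC_pairs, EC_pairs]
  have he : ((univ ×ˢ univ).filter fun p : V × V => (dE H u v).Adj p.1 p.2)
      = (((univ ×ˢ univ).filter fun p : V × V => H.Adj p.1 p.2).erase (u, v)).erase (v, u) := by
    ext ⟨x, y⟩
    simp only [mem_filter, mem_product, mem_univ, true_and, mem_erase, ne_eq, Prod.mk.injEq, adj_dE]
    tauto
  rw [he]
  have hmem1 : ((v, u) : V × V) ∈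
      ((univ ×ˢ univ).filter fun p : V × V => H.Adj p.1 p.2).erase (u, v) := by
    refine Finset.mem_erase.2 ⟨fun h => hne (congrArg Prod.fst h).symm, ?_⟩
    exact Finset.mem_filter.2 ⟨Finset.mem_product.2 ⟨mem_univ _, mem_univ _⟩, huv.symm⟩
  have hmem2 : ((u, v) : V × V) ∈
      ((univ ×ˢ univ).filter fun p : V × V => H.Adj p.1 p.2) := by
    simp only [mem_filter, mem_product, mem_univ, true_and]
    exact huv
  have c1 := Finset.card_erase_add_one hmem1
  have c2 := Finset.card_erase_add_one hmem2
  omega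

lemma EC_rG_erase (H : SimpleGraph V) (x : V) :
    EC (rG H (univ.erase x)) + 2 * dg H x = EC H := by
  rw [EC_pairs, EC_pairs]
  set P := (univ ×ˢ univ).filter fun p : V × V => H.Adj p.1 p.2 with hP
  have he : ((univ ×ˢ univ).filter fun p : V × V => (rG H (univ.erase x)).Adj p.1 p.2)
      = P.filter fun p => ¬(p.1 = x ∨ p.2 = x) := by
    ext ⟨a, b⟩
    simp only [hP, mem_filter, mem_product, mem_univ, true_and, rG, mem_erase, not_or]
    tauto
  rw [he]
  have hsplit := Finset.card_filter_add_card_filter_not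
    (s := P) (p := fun p : V × V => p.1 = x ∨ p.2 = x)
  have hcard1 : (P.filter fun p => p.1 = x).card = dg H x := by
    apply Finset.card_bij (fun p _ => p.2)
    · rintro ⟨a, b⟩ hp
      simp only [hP, mem_filter, mem_product, mem_univ, true_and] at hp
      rw [mem_nb]
      rw [hp.2] at hp
      exact hp.1
    · rintro ⟨a, b⟩ ha ⟨a', b'⟩ hb h
      simp only [hP, mem_filter] at ha hb
      simp only at h
      simp [Prod.mk.injEq, h, ha.2, hb.2]
    · intro b hb
      refine ⟨(x, b), ?_, rfl⟩
      simp only [hP, mem_filter, mem_product, mem_univ, true_and, and_true]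
      exact mem_nb.1 hb
  have hcard2 : (P.filter fun p => p.2 = x).card = dg H x := by
    apply Finset.card_bij (fun p _ => p.1)
    · rintro ⟨a, b⟩ hp
      simp only [hP, mem_filter, mem_product, mem_univ, true_and] at hp
      rw [mem_nb]
      rw [hp.2] at hp
      exact hp.1.symm
    · rintro ⟨a, b⟩ ha ⟨a', b'⟩ hb h
      simp only [hP, mem_filter] at ha hb
      simp only at h
      simp [Prod.mk.injEq, h, ha.2, hb.2]
    · intro b hb
      refine ⟨(b, x), ?_, rfl⟩
      simp only [hP, mem_filter, mem_product, mem_univ, true_and, and_true]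
      exact (mem_nb.1 hb).symm
  have hor : (P.filter fun p => p.1 = x ∨ p.2 = x).card = 2 * dg H x := by
    rw [Finset.filter_or]
    rw [Finset.card_union_of_disjoint, hcard1, hcard2]
    · ring
    · simp only [Finset.disjoint_left, mem_filter]
      rintro ⟨a, b⟩ ⟨haP, ha⟩ ⟨hbP, hb⟩
      simp only at ha hb
      rw [ha, hb] at haP
      simp only [hP, mem_filter] at haP
      exact H.loopless.irrefl x haP.2
  omega

lemma nb_dE_other {H : SimpleGraph V} {u v w : V} (hwu : w ≠ u) (hwv : w ≠ v) :
    nb (dE H u v) w = nb H w := by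
  ext y
  rw [mem_nb, mem_nb, adj_dE]
  exact ⟨fun h => h.1, fun h => ⟨h, fun hh => hwu hh.1, fun hh => hwv hh.1⟩⟩

lemma nb_dE_v {H : SimpleGraph V} {u v : V} (hne : u ≠ v) :
    nb (dE H u v) v = (nb H v).erase u := by
  ext y
  rw [mem_nb, adj_dE, mem_erase, mem_nb]
  constructor
  · rintro ⟨h1, h2, h3⟩
    exact ⟨fun hy => h3 ⟨rfl, hy⟩, h1⟩
  · rintro ⟨hy, h1⟩
    exact ⟨h1, fun hh => hne hh.1.symm, fun hh => hy hh.2⟩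

lemma cdg_dE_drop {H : SimpleGraph V} {u v y : V} (huv : H.Adj u v)
    (hy : y ∈ nb H u) (hyv : y ≠ v) :
    cdg (dE H u v) v y + 1 = cdg H v y := by
  have hadj : H.Adj u y := mem_nb.1 hy
  have hyu : y ≠ u := fun h => H.loopless.irrefl u (h ▸ hadj)
  have h1 : nb (dE H u v) v = (nb H v).erase u := nb_dE_v huv.ne
  have h2 : nb (dE H u v) y = nb H y := nb_dE_other hyu hyv
  rw [cdg, cdg, h1, h2, erase_inter]
  refine Finset.card_erase_add_one ?_
  rw [mem_inter, mem_nb, mem_nb]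
  exact ⟨huv.symm, hadj.symm⟩


noncomputable def PHI (S1 : Finset V) (T0 : ℕ) (H : SimpleGraph V) : ℕ :=
  ∑ p ∈ S1 ×ˢ S1, min (cdg H p.1 p.2) T0

lemma PHI_mono (S1 : Finset V) (T0 : ℕ) {H H' : SimpleGraph V} (h : H ≤ H') :
    PHI S1 T0 H ≤ PHI S1 T0 H' :=
  Finset.sum_le_sum fun p _ => min_le_min (cdg_mono h _ _) le_rfl

lemma PHI_le (S1 : Finset V) (T0 : ℕ) (H : SimpleGraph V) :
    PHI S1 T0 H ≤ S1.card * S1.card * T0 := by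
  calc PHI S1 T0 H ≤ ∑ _p ∈ S1 ×ˢ S1, T0 :=
        Finset.sum_le_sum fun p _ => min_le_right _ _
    _ = S1.card * S1.card * T0 := by
        rw [Finset.sum_const, smul_eq_mul, card_product]

lemma PHI_drop (S1 : Finset V) (T0 : ℕ) {H : SimpleGraph V} {u v : V} (huv : H.Adj u v)
    (hS : ∀ a b, H.Adj a b → a ∈ S1 ∧ b ∈ S1) :
    PHI S1 T0 (dE H u v) + 2 * (((nb H u).erase v).filter fun y => cdg H v y ≤ T0).card
      ≤ PHI S1 T0 H := by
  set L := ((nb H u).erase v).filter (fun y => cdg H v y ≤ T0) with hL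
  set Q : Finset (V × V) := ({v} ×ˢ L) ∪ (L ×ˢ {v}) with hQdef
  have hvL : v ∉ L := fun h => (mem_erase.1 (mem_filter.1 h).1).1 rfl
  have hQcard : Q.card = 2 * L.card := by
    rw [hQdef, card_union_of_disjoint, card_product, card_product, card_singleton]
    · ring
    · simp only [Finset.disjoint_left, mem_product, mem_singleton]
      rintro ⟨a, b⟩ ⟨ha, hb⟩ ⟨ha', hb'⟩
      exact hvL (ha ▸ ha')
  have hQsub : Q ⊆ S1 ×ˢ S1 := by
    intro p hp
    have hvS : v ∈ S1 := (hS u v huv).2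
    have hLS : ∀ y ∈ L, y ∈ S1 := by
      intro y hy
      have : y ∈ nb H u := (mem_erase.1 (mem_filter.1 hy).1).2
      exact (hS u y (mem_nb.1 this)).2
    rcases mem_union.1 hp with h | h
    · obtain ⟨h1, h2⟩ := mem_product.1 h
      exact mem_product.2 ⟨(mem_singleton.1 h1) ▸ hvS, hLS _ h2⟩
    · obtain ⟨h1, h2⟩ := mem_product.1 h
      exact mem_product.2 ⟨hLS _ h1, (mem_singleton.1 h2) ▸ hvS⟩
  have key : ∀ y ∈ L, min (cdg (dE H u v) v y) T0 + 1 ≤ min (cdg H v y) T0 := by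
    intro y hy
    obtain ⟨hy1, hy2⟩ := mem_filter.1 hy
    have hyv : y ≠ v := (mem_erase.1 hy1).1
    have hynb : y ∈ nb H u := (mem_erase.1 hy1).2
    have hdrop := cdg_dE_drop huv hynb hyv
    rw [min_eq_left hy2, min_eq_left (by omega)]
    omega
  have hQ1 : ∀ p ∈ Q, min (cdg (dE H u v) p.1 p.2) T0 + 1 ≤ min (cdg H p.1 p.2) T0 := by
    rintro ⟨a, b⟩ hp
    rcases mem_union.1 hp with h | h
    · obtain ⟨h1, h2⟩ := mem_product.1 h
      have hb := key b h2
      have ha : a = v := mem_singleton.1 h1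
      subst ha
      exact hb
    · obtain ⟨h1, h2⟩ := mem_product.1 h
      have ha := key a h1
      have hb : b = v := mem_singleton.1 h2
      rw [hb, cdg_comm (dE H u v), cdg_comm H]
      exact ha
  have hmono : ∀ p ∈ (S1 ×ˢ S1) \ Q,
      min (cdg (dE H u v) p.1 p.2) T0 ≤ min (cdg H p.1 p.2) T0 :=
    fun p _ => min_le_min (cdg_mono (dE_le H u v) _ _) le_rfl
  have h2 : ∑ p ∈ Q, (min (cdg (dE H u v) p.1 p.2) T0 + 1)
      ≤ ∑ p ∈ Q, min (cdg H p.1 p.2) T0 := Finset.sum_le_sum hQ1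
  rw [Finset.sum_add_distrib, Finset.sum_const, smul_eq_mul, mul_one] at h2
  have h3 : ∑ p ∈ (S1 ×ˢ S1) \ Q, min (cdg (dE H u v) p.1 p.2) T0
      ≤ ∑ p ∈ (S1 ×ˢ S1) \ Q, min (cdg H p.1 p.2) T0 := Finset.sum_le_sum hmono
  have e1 : PHI S1 T0 (dE H u v)
      = ∑ p ∈ (S1 ×ˢ S1) \ Q, min (cdg (dE H u v) p.1 p.2) T0
        + ∑ p ∈ Q, min (cdg (dE H u v) p.1 p.2) T0 := (Finset.sum_sdiff hQsub).symm
  have e2 : PHI S1 T0 H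
      = ∑ p ∈ (S1 ×ˢ S1) \ Q, min (cdg H p.1 p.2) T0
        + ∑ p ∈ Q, min (cdg H p.1 p.2) T0 := (Finset.sum_sdiff hQsub).symm
  rw [e1, e2, ← hQcard]
  omega

lemma topk : ∀ (k : ℕ) (W : Finset V) (f : V → ℕ), k ≤ W.card →
    ∃ U, U ⊆ W ∧ U.card = k ∧ k * (∑ v ∈ W, f v) ≤ W.card * (∑ v ∈ U, f v) := by
  intro k
  induction k with
  | zero =>
    intro W f _
    exact ⟨∅, empty_subset _, card_empty, by simp⟩
  | succ k ih =>
    intro W f hk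
    have hne : W.Nonempty := card_pos.1 (by omega)
    obtain ⟨w, hwW, hmax⟩ := Finset.exists_max_image W f hne
    obtain ⟨U', hU'sub, hU'card, hU'⟩ := ih (W.erase w) f (by rw [card_erase_of_mem hwW]; omega)
    have hwU' : w ∉ U' := fun h => (mem_erase.1 (hU'sub h)).1 rfl
    refine ⟨insert w U', ?_, ?_, ?_⟩
    · intro x hx
      rcases mem_insert.1 hx with rfl | hx'
      · exact hwW
      · exact (erase_subset _ _) (hU'sub hx')
    · rw [card_insert_of_notMem hwU', hU'card]
    · rw [Finset.sum_insert hwU']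
      obtain ⟨d, hd⟩ : ∃ d, W.card = k + 1 + d := ⟨W.card - (k+1), by omega⟩
      have hcerase : (W.erase w).card = k + d := by
        rw [card_erase_of_mem hwW]; omega
      have hS : ∑ x ∈ W.erase w, f x + f w = ∑ x ∈ W, f x :=
        Finset.sum_erase_add W f hwW
      have hA : k * (∑ x ∈ W.erase w, f x) ≤ (k + d) * (∑ x ∈ U', f x) := by
        rw [← hcerase]; exact hU'
      have hB : ∑ x ∈ W.erase w, f x ≤ ∑ x ∈ U', f x + d * f w := by
        have hsd : ∑ x ∈ (W.erase w) \ U', f x + ∑ x ∈ U', f x = ∑ x ∈ W.erase w, f x :=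
          Finset.sum_sdiff hU'sub
        have hbound : ∑ x ∈ (W.erase w) \ U', f x ≤ ((W.erase w) \ U').card * f w := by
          apply Finset.sum_le_card_nsmul
          intro x hx
          exact hmax x ((erase_subset _ _) (mem_sdiff.1 hx).1)
        have hcard : ((W.erase w) \ U').card = d := by
          rw [card_sdiff_of_subset hU'sub, hcerase, hU'card]; omega
        rw [hcard] at hbound
        omega
      rw [← hS, hd]
      nlinarith [hA, hB, Nat.zero_le (f w), Nat.zero_le (∑ x ∈ U', f x)]


noncomputable def HC (m1 E1 : ℕ) (H : SimpleGraph V) (u v : V) : ℕ :=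
  ((nb H u).filter fun w => E1^2 ≤ 64 * m1^3 * (cdg H v w)^2).card

lemma phase2 (S1 : Finset V) (H1 : SimpleGraph V) (m1 E1 T0 : ℕ)
    (hm1 : S1.card = m1)
    (hT0 : ∀ c : ℕ, ¬ (E1^2 ≤ 64 * m1^3 * c^2) → c ≤ T0) :
    ∀ μ : ℕ, ∀ A : Finset V, ∀ H : SimpleGraph V, ∀ k : ℕ,
      A.card + EC H ≤ μ → H ≤ H1 → (∀ a b, H.Adj a b → a ∈ A ∧ b ∈ A) → A ⊆ S1 →
      2*m1*E1 ≤ 2*m1*(EC H) + (m1 - A.card)*E1 + 4*m1*k →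
      k*E1 + 4*m1*(PHI S1 T0 H) ≤ 8*k*m1 + 4*m1*(PHI S1 T0 H1) →
      ∃ A2 H2 k2, A2 ⊆ A ∧ H2 ≤ H ∧ (∀ a b, H2.Adj a b → a ∈ A2 ∧ b ∈ A2) ∧
        (2*m1*E1 ≤ 2*m1*(EC H2) + (m1 - A2.card)*E1 + 4*m1*k2) ∧
        (k2*E1 + 4*m1*(PHI S1 T0 H2) ≤ 8*k2*m1 + 4*m1*(PHI S1 T0 H1)) ∧
        (∀ v ∈ A2, E1 ≤ 4*m1*(dg H2 v)) ∧
        (∀ u v, H2.Adj u v → E1 ≤ 8*m1*(HC m1 E1 H2 u v)) := by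
  intro μ
  induction μ with
  | zero =>
    intro A H k hμ hle hin hsub hINVa hINVb
    have hE : EC H = 0 := by omega
    refine ⟨A, H, k, Finset.Subset.refl A, le_refl H, hin, hINVa, hINVb, ?_, ?_⟩
    · intro v hv
      have : A.card = 0 := by omega
      rw [Finset.card_eq_zero.1 this] at hv
      exact absurd hv (notMem_empty v)
    · intro u v huv
      have := EC_pos_of_adj huv
      omega
  | succ μ ih =>
    intro A H k hμ hle hin hsub hINVa hINVb
    by_cases hbv : ∃ v ∈ A, 4*m1*(dg H v) < E1
    · -- delete a low-degree vertex
      obtain ⟨v, hvA, hdv⟩ := hbv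
      have hAm : A.card ≤ m1 := hm1 ▸ card_le_card hsub
      have hA1 : 1 ≤ A.card := card_pos.2 ⟨v, hvA⟩
      have hEe := EC_rG_erase H v
      have hcard := card_erase_of_mem hvA
      have hECle : EC (rG H (univ.erase v)) ≤ EC H := by omega
      obtain ⟨A2, H2, k2, h1, h2, h3, h4, h5, h6, h7⟩ :=
        ih (A.erase v) (rG H (univ.erase v)) k
          (by omega)
          ((rG_le H _).trans hle)
          (by
            intro a b hab
            obtain ⟨hab', ha, hb⟩ := hab
            exact ⟨mem_erase.2 ⟨(mem_erase.1 ha).1, (hin a b hab').1⟩,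
                   mem_erase.2 ⟨(mem_erase.1 hb).1, (hin a b hab').2⟩⟩)
          ((erase_subset _ _).trans hsub)
          (by
            have e1 : 2*m1*(EC H) = 2*m1*(EC (rG H (univ.erase v))) + 4*(m1*(dg H v)) := by
              rw [← hEe]; ring
            have hd' : 4*(m1*(dg H v)) < E1 := by
              calc 4*(m1*(dg H v)) = 4*m1*(dg H v) := by ring
                _ < E1 := hdv
            have hsubst : (m1 - (A.erase v).card) * E1 = (m1 - A.card)*E1 + E1 := by
              rw [hcard]
              have : m1 - (A.card - 1) = (m1 - A.card) + 1 := by omega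
              rw [this, add_mul, one_mul]
            rw [hsubst]
            linarith [hINVa])
          (by
            have hP : PHI S1 T0 (rG H (univ.erase v)) ≤ PHI S1 T0 H :=
              PHI_mono S1 T0 (rG_le H _)
            have : 4*m1*(PHI S1 T0 (rG H (univ.erase v))) ≤ 4*m1*(PHI S1 T0 H) :=
              Nat.mul_le_mul_left _ hP
            linarith [hINVb])
      exact ⟨A2, H2, k2, h1.trans (erase_subset _ _), h2.trans (rG_le H _), h3, h4, h5, h6, h7⟩
    · by_cases hbp : ∃ u v, H.Adj u v ∧ 8*m1*(HC m1 E1 H u v) < E1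
      · -- delete a bad edge
        obtain ⟨u, v, huv, hbad⟩ := hbp
        push_neg at hbv
        have hEe := EC_dE huv
        have huA : u ∈ A := (hin u v huv).1
        have hdu : E1 ≤ 4*m1*(dg H u) := hbv u huA
        have hSin : ∀ a b, H.Adj a b → a ∈ S1 ∧ b ∈ S1 := by
          intro a b hab
          exact ⟨hsub (hin a b hab).1, hsub (hin a b hab).2⟩
        have hdrop := PHI_drop S1 T0 huv hSin
        set L := ((nb H u).erase v).filter (fun y => cdg H v y ≤ T0) with hLdef
        -- lower bound on L.card
        have hvnb : v ∈ nb H u := mem_nb.2 huv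
        have hLlow : dg H u ≤ L.card + 1 + HC m1 E1 H u v := by
          have hsplit := Finset.card_filter_add_card_filter_not
            (s := (nb H u).erase v) (p := fun y => cdg H v y ≤ T0)
          have hsub2 : ((nb H u).erase v).filter (fun y => ¬(cdg H v y ≤ T0))
              ⊆ (nb H u).filter (fun w => E1^2 ≤ 64 * m1^3 * (cdg H v w)^2) := by
            intro y hy
            obtain ⟨hy1, hy2⟩ := mem_filter.1 hy
            refine mem_filter.2 ⟨(mem_erase.1 hy1).2, ?_⟩
            by_contra hh
            exact hy2 (hT0 _ hh)
          have hle2 := card_le_card hsub2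
          have hce := card_erase_of_mem hvnb
          rw [HC, dg_def, hLdef]
          omega
        obtain ⟨A2, H2, k2, h1, h2, h3, h4, h5, h6, h7⟩ :=
          ih A (dE H u v) (k+1)
            (by omega)
            ((dE_le H u v).trans hle)
            (fun a b hab => hin a b (dE_le H u v hab))
            hsub
            (by
              have e1 : 2*m1*(EC (dE H u v)) + 4*m1 = 2*m1*(EC H) := by
                rw [← hEe]; ring
              have e2 : 4*m1*(k+1) = 4*m1*k + 4*m1 := by ring
              rw [e2]
              linarith [hINVa])
            (by
              -- key potential-drop inequality
              have hmul1 : 8*(m1*(dg H u)) ≤ 8*(m1*(L.card + 1 + HC m1 E1 H u v)) :=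
                Nat.mul_le_mul_left _ (Nat.mul_le_mul_left _ hLlow)
              have e3 : 8*(m1*(L.card + 1 + HC m1 E1 H u v))
                  = 8*(m1*L.card) + 8*m1 + 8*(m1*(HC m1 E1 H u v)) := by ring
              have hdu' : 2*E1 ≤ 8*(m1*(dg H u)) := by
                calc 2*E1 ≤ 2*(4*m1*(dg H u)) := by omega
                  _ = 8*(m1*(dg H u)) := by ring
              have hbad' : 8*(m1*(HC m1 E1 H u v)) + 1 ≤ E1 := by
                calc 8*(m1*(HC m1 E1 H u v)) + 1 = 8*m1*(HC m1 E1 H u v) + 1 := by ring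
                  _ ≤ E1 := hbad
              have hkey : E1 + 8*m1 ≤ 8*(m1*L.card) + 16*m1 := by omega
              have hdropm : 4*m1*(PHI S1 T0 (dE H u v)) + 8*(m1*L.card) ≤ 4*m1*(PHI S1 T0 H) := by
                calc 4*m1*(PHI S1 T0 (dE H u v)) + 8*(m1*L.card)
                    = 4*m1*(PHI S1 T0 (dE H u v) + 2*L.card) := by ring
                  _ ≤ 4*m1*(PHI S1 T0 H) := Nat.mul_le_mul_left _ hdrop
              have e4 : (k+1)*E1 = k*E1 + E1 := by ring
              have e5 : 8*(k+1)*m1 = 8*k*m1 + 8*m1 := by ring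
              rw [e4, e5]
              linarith [hINVb])
        exact ⟨A2, H2, k2, h1, h2.trans (dE_le H u v), h3, h4, h5, h6, h7⟩
      · -- terminal
        push_neg at hbv hbp
        exact ⟨A, H, k, Finset.Subset.refl A, le_refl H, hin, hINVa, hINVb, hbv, fun u v huv => hbp u v huv⟩



section arith
-- small arithmetic helper lemmas (kept separate so that `nlinarith` works in a tiny context)

lemma arith_c14a {α x y e : ℝ} (hα : 10 ≤ α) (hxy : x ≤ y) (he : (5/4)*α*y ≤ e)
    (hx : 0 ≤ x) : α/20 * (8*x) ≤ e := by nlinarith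

lemma arith_c14b {E m1 s1 E1 s2 m : ℝ} (h : 640*E*m1*s1 ≤ 3000*E1*s2*m) :
    320*E*(8*(m1*s1)) ≤ E1*(m*12000*s2) := by nlinarith

lemma arith_m1280 {m E E2 m2 : ℝ} (h1 : E ≤ 4*E2) (h2 : m*E2 ≤ m2*(320*E)) (hm : 0 ≤ m)
    (hE : 0 < E) : m*E ≤ 1280*m2*E := by nlinarith

lemma arith_trigger {E E1 m m1 m2 s s1 s2 : ℝ} (h : 3000*E1*s2*m < 640*E*m1*s1)
    (hE1 : 5*E ≤ 8*E1) (hm1 : m1 ≤ m) (hs1 : s1 ≤ s) (hsq : s^2 = m) (hsq2 : s2^2 = m2)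
    (hs1p : 0 ≤ s1) (hs2p : 0 ≤ s2) (hsp : 0 ≤ s) (hEp : 0 < E) (hmp : 0 < m)
    (hm1p : 0 ≤ m1) : 8*m2 ≤ m := by
  have h2 : m1*s1 ≤ m*s := mul_le_mul hm1 hs1 hs1p (le_of_lt hmp)
  have h3 : 3000*E1*s2*m < 640*E*(m*s) := by nlinarith
  have h4 : 1875*E*s2*m ≤ 3000*E1*s2*m := by nlinarith [mul_nonneg (mul_nonneg hs2p (le_of_lt hmp)) (le_of_lt hEp), mul_nonneg hs2p (le_of_lt hmp)]
  have h5 : 1875*s2 < 640*s := by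
    have hEm : 0 < E*m := by positivity
    nlinarith
  nlinarith [sq_nonneg s2, sq_nonneg s, hs2p]

lemma arith_pot_trigger {X e e2 ea m m2 : ℝ} (hX : 0 ≤ X) (h1 : X*m^61 ≤ e^42)
    (h2 : e ≤ 4*e2) (h3 : e2 ≤ ea) (h4 : 8*m2 ≤ m) (hm2 : 0 ≤ m2) (he : 0 ≤ e) :
    X*m2^61 ≤ ea^42 := by
  have ha : (8*m2)^61 ≤ m^61 := pow_le_pow_left₀ (by positivity) h4 _
  have hb : e^42 ≤ (4*ea)^42 := pow_le_pow_left₀ he (by linarith) _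
  have hc : (X*m2^61)*(8:ℝ)^61 ≤ ((4:ℝ)^42) * ea^42 := by
    calc (X*m2^61)*(8:ℝ)^61 = X*(8*m2)^61 := by rw [mul_pow]; ring
      _ ≤ X*m^61 := mul_le_mul_of_nonneg_left ha hX
      _ ≤ e^42 := h1
      _ ≤ (4*ea)^42 := hb
      _ = 4^42*ea^42 := by rw [mul_pow]
  have hea : (0:ℝ) ≤ ea^42 := by positivity
  have hd : ((4:ℝ)^42) * ea^42 ≤ ((8:ℝ)^61) * ea^42 := by
    apply mul_le_mul_of_nonneg_right _ hea
    norm_num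
  have hfin : (X*m2^61)*(8:ℝ)^61 ≤ ea^42*(8:ℝ)^61 := by
    calc (X*m2^61)*(8:ℝ)^61 ≤ ((8:ℝ)^61) * ea^42 := hc.trans hd
      _ = ea^42*(8:ℝ)^61 := by ring
  exact le_of_mul_le_mul_right hfin (by positivity)

lemma arith_pot_B1 {X e eT τ m : ℝ} (hX : 0 ≤ X) (hPOT : X*m^61 ≤ e^42) (h3 : 3*e ≤ 16*eT)
    (hτ : 320*τ ≤ m) (hτ0 : 0 ≤ τ) (he : 0 ≤ e) : X*τ^61 ≤ eT^42 := by
  have h1 : X*(320*τ)^61 ≤ X*m^61 :=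
    mul_le_mul_of_nonneg_left (pow_le_pow_left₀ (by positivity) hτ _) hX
  have h2 : (3*e)^42 ≤ (16*eT)^42 := pow_le_pow_left₀ (by positivity) h3 _
  have heT : (0:ℝ) ≤ eT^42 := by
    have : (0:ℝ) ≤ 16*eT := le_trans (by positivity) h3
    positivity
  have hc : (X*τ^61)*((320:ℝ)^61*(3:ℝ)^42) ≤ ((16:ℝ)^42)*eT^42 := by
    calc (X*τ^61)*((320:ℝ)^61*(3:ℝ)^42) = (X*(320*τ)^61)*(3:ℝ)^42 := by
          rw [mul_pow]; ring
      _ ≤ (X*m^61)*(3:ℝ)^42 := by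
          apply mul_le_mul_of_nonneg_right h1 (by positivity)
      _ ≤ (e^42)*(3:ℝ)^42 := by
          apply mul_le_mul_of_nonneg_right hPOT (by positivity)
      _ = (3*e)^42 := by rw [mul_pow]; ring
      _ ≤ (16*eT)^42 := h2
      _ = ((16:ℝ)^42)*eT^42 := by rw [mul_pow]
  have hd : ((16:ℝ)^42)*eT^42 ≤ eT^42*((320:ℝ)^61*(3:ℝ)^42) := by
    calc ((16:ℝ)^42)*eT^42 = eT^42*((16:ℝ)^42) := by ring
      _ ≤ eT^42*((320:ℝ)^61*(3:ℝ)^42) := by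
          exact mul_le_mul_of_nonneg_left (by norm_num) heT
  exact le_of_mul_le_mul_right (hc.trans hd) (by positivity)

lemma arith_pot_B2 {X e e2 τ m : ℝ} (hX : 0 ≤ X) (hPOT : X*m^61 ≤ e^42)
    (hk : 3*τ*e ≤ 8*m*e2) (hτm : 320*τ ≤ m) (hτ0 : 0 ≤ τ) (he : 0 ≤ e) (hm : 0 < m)
    (he2 : 0 ≤ e2) : X*(3*τ)^61 ≤ e2^42 := by
  have h1 : (3*τ*e)^42 ≤ (8*m*e2)^42 := pow_le_pow_left₀ (by positivity) hk _
  have h319 : ((320:ℝ)*τ)^19 ≤ m^19 := pow_le_pow_left₀ (by positivity) hτm _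
  have hc : (X*(3*τ)^61)*((8:ℝ)^42*m^42) ≤ (e2^42)*((8:ℝ)^42*m^42) := by
    have c1 : (3:ℝ)^19*(8:ℝ)^42 ≤ (320:ℝ)^19 := by norm_num
    calc (X*(3*τ)^61)*((8:ℝ)^42*m^42)
        = (X*(3:ℝ)^42*τ^42*m^42)*(τ^19*((3:ℝ)^19*(8:ℝ)^42)) := by rw [mul_pow]; ring
      _ ≤ (X*(3:ℝ)^42*τ^42*m^42)*(τ^19*(320:ℝ)^19) := by
          exact mul_le_mul_of_nonneg_left
            (mul_le_mul_of_nonneg_left c1 (by positivity)) (by positivity)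
      _ = (X*(3:ℝ)^42*τ^42*m^42)*((320*τ)^19) := by rw [mul_pow]; ring
      _ ≤ (X*(3:ℝ)^42*τ^42*m^42)*(m^19) :=
          mul_le_mul_of_nonneg_left h319 (by positivity)
      _ = ((3:ℝ)^42*τ^42)*(X*m^61) := by ring
      _ ≤ ((3:ℝ)^42*τ^42)*(e^42) :=
          mul_le_mul_of_nonneg_left hPOT (by positivity)
      _ = (3*τ*e)^42 := by rw [mul_pow, mul_pow]
      _ ≤ (8*m*e2)^42 := h1
      _ = (e2^42)*((8:ℝ)^42*m^42) := by rw [mul_pow, mul_pow]; ring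
  exact le_of_mul_le_mul_right hc (by positivity)

end arith

noncomputable def Conc (G : SimpleGraph V) (α : ℝ) : Prop :=
  ∃ (s : Finset V) (H : SimpleGraph V) (α' : ℝ),
    H ≤ G ∧ (∀ a b : V, H.Adj a b → a ∈ s ∧ b ∈ s) ∧ 1 ≤ s.card ∧ α/20 ≤ α' ∧
    2 * (α' * (s.card:ℝ) * Real.sqrt (s.card:ℝ)) ≤ (EC H : ℝ) ∧
    (∀ v : V, (dg H v : ℝ) ≤ 12000 * α' * Real.sqrt (s.card:ℝ)) ∧
    (∀ u v : V, H.Adj u v → α' * Real.sqrt (s.card:ℝ) ≤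
      ((univ.filter fun w => H.Adj u w ∧ α' ≤ (cdg H v w : ℝ)).card : ℝ)) ∧
    (2*α)^42 * (Fintype.card V:ℝ)^2 ≤ 1280^23 * (s.card:ℝ)^23

lemma outer (G : SimpleGraph V) (α : ℝ) (hα : (10:ℝ) ≤ α) :
    ∀ M : ℕ, ∀ S : Finset V, S.card ≤ M → 1 ≤ S.card →
      (2*α)^42 * (Fintype.card V : ℝ)^2 * (S.card : ℝ)^61 ≤ (EC (rG G S) : ℝ)^42 →
      Conc G α := by
  intro M
  induction M with
  | zero => intro S h0 h1 _; omega
  | succ M ih =>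
    intro S hSM hS1 hPOT
    have hαpos : (0:ℝ) < α := by linarith
    set n := Fintype.card V with hn
    set m := S.card with hm
    set E := EC (rG G S) with hE
    clear_value n m E
    have hmn : m ≤ n := by rw [hm, hn]; exact Finset.card_le_univ S
    have hm1R : (1:ℝ) ≤ (m:ℝ) := by exact_mod_cast hS1
    have hmpos : (0:ℝ) < (m:ℝ) := by linarith
    have hspos : (0:ℝ) < Real.sqrt m := Real.sqrt_pos.2 hmpos
    have hsq : (Real.sqrt m)^2 = (m:ℝ) := Real.sq_sqrt (le_of_lt hmpos)
    -- E ≥ 2 α m √m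
    have hd1 : 2*α*(m:ℝ)*Real.sqrt m ≤ (E:ℝ) := by
      have h42 : (2*α*(m:ℝ)*Real.sqrt m)^42 = (2*α)^42 * (m:ℝ)^42 * ((Real.sqrt m)^2)^21 := by
        ring
      have hchain : (2*α*(m:ℝ)*Real.sqrt m)^42 ≤ (E:ℝ)^42 := by
        rw [h42, hsq]
        calc (2*α)^42 * (m:ℝ)^42 * (m:ℝ)^21 = (2*α)^42 * (m:ℝ)^2 * (m:ℝ)^61 := by ring
          _ ≤ (2*α)^42 * (n:ℝ)^2 * (m:ℝ)^61 := by
              have : (m:ℝ) ≤ (n:ℝ) := by exact_mod_cast hmn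
              gcongr
          _ ≤ (E:ℝ)^42 := hPOT
      exact le_of_pow_le_pow_left₀ (by norm_num) (by positivity) hchain
    have hEposR : (0:ℝ) < (E:ℝ) := by
      have h1 : (0:ℝ) < 2*α*(m:ℝ)*Real.sqrt m := by positivity
      linarith
    have hE1ℕ : 1 ≤ E := by exact_mod_cast Nat.one_le_iff_ne_zero.2 (by
      intro h0; rw [h0] at hEposR; norm_num at hEposR)
    have hEle : (E:ℝ) ≤ (m:ℝ)*(m:ℝ) := by
      have := EC_rG_le_sq G S
      rw [← hE, ← hm] at this
      exact_mod_cast this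
    have hsqm : 2*α ≤ Real.sqrt m := by
      have key : (2*α)*((m:ℝ)*Real.sqrt m) ≤ (Real.sqrt m)*((m:ℝ)*Real.sqrt m) := by
        have hmm : (m:ℝ)*(m:ℝ) = Real.sqrt m * ((m:ℝ) * Real.sqrt m) := by
          rw [show Real.sqrt (m:ℝ) * ((m:ℝ) * Real.sqrt (m:ℝ))
            = (Real.sqrt (m:ℝ))^2 * (m:ℝ) from by ring, hsq]
        calc (2*α)*((m:ℝ)*Real.sqrt m) = 2*α*(m:ℝ)*Real.sqrt m := by ring
          _ ≤ (E:ℝ) := hd1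
          _ ≤ (m:ℝ)*(m:ℝ) := hEle
          _ = Real.sqrt m * ((m:ℝ) * Real.sqrt m) := hmm
      exact le_of_mul_le_mul_right key (by positivity)
    have hs20 : (20:ℝ) ≤ Real.sqrt m := by linarith
    have hm400 : (400:ℝ) ≤ (m:ℝ) := by nlinarith [hsq, hs20, sq_nonneg (Real.sqrt (m:ℝ) - 20)]
    have hm400ℕ : 400 ≤ m := by exact_mod_cast hm400
    -- high-degree vertices
    set T := S.filter (fun v => 320 * E < m * (nb G v ∩ S).card) with hT
    set τ := T.card with hτdef
    clear_value τ
    have hTS : T ⊆ S := filter_subset _ _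
    have hτm : 320 * τ < m := by
      have hsum : ∑ v ∈ T, (nb G v ∩ S).card ≤ E := by
        rw [hE, EC_rG]
        exact Finset.sum_le_sum_of_subset hTS
      have hlow : ∀ v ∈ T, 320*E + 1 ≤ m * (nb G v ∩ S).card := by
        intro v hv
        have := (mem_filter.1 hv).2
        omega
      have hcn : τ * (320*E+1) ≤ ∑ v ∈ T, m * (nb G v ∩ S).card := by
        have := Finset.card_nsmul_le_sum T (fun v => m * (nb G v ∩ S).card) (320*E+1) hlow
        rw [hτdef]
        simpa using this
      have hms : ∑ v ∈ T, m * (nb G v ∩ S).card = m * ∑ v ∈ T, (nb G v ∩ S).card := by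
        rw [Finset.mul_sum]
      have h2 : τ * (320*E+1) ≤ m * E := by
        rw [hms] at hcn
        exact hcn.trans (Nat.mul_le_mul_left _ hsum)
      rcases Nat.eq_zero_or_pos τ with h0 | hτpos
      · omega
      · have e : τ*(320*E+1) = 320*τ*E + τ := by ring
        have h3 : 320*τ*E < m*E := by linarith
        exact lt_of_mul_lt_mul_right h3 (Nat.zero_le E)
    -- split off the high-degree vertices
    set S1 := S \ T with hS1def
    set m1 := S1.card with hm1def
    set E1 := EC (rG G S1) with hE1def
    clear_value m1 E1
    have hUS : S1 ∪ T = S := sdiff_union_of_subset hTS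
    have hdisj : Disjoint S1 T := sdiff_disjoint
    have hID : E = E1 + EC (rG G T) + 2 * ∑ v ∈ S1, (nb G v ∩ T).card := by
      rw [hE, hE1def, ← hUS]
      exact EC_rG_split G hdisj
    have hm1m : m1 = m - τ := by rw [hm1def, hS1def, card_sdiff_of_subset hTS]; omega
    by_cases hcaseA : 5 * E ≤ 8 * E1
    · -- CASE A : terminal case, clean up with phase 2
      have hm11 : 1 ≤ m1 := by omega
      have hm1le : m1 ≤ m := by omega
      have hm1R1 : (1:ℝ) ≤ (m1:ℝ) := by exact_mod_cast hm11
      have hm1posR : (0:ℝ) < (m1:ℝ) := by linarith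
      have hs1pos : 0 < Real.sqrt (m1:ℝ) := Real.sqrt_pos.2 hm1posR
      have hsq1 : (Real.sqrt (m1:ℝ))^2 = (m1:ℝ) := Real.sq_sqrt (le_of_lt hm1posR)
      have hm1leR : (m1:ℝ) ≤ (m:ℝ) := by exact_mod_cast hm1le
      have hs1le : Real.sqrt (m1:ℝ) ≤ Real.sqrt (m:ℝ) := Real.sqrt_le_sqrt hm1leR
      have hcaseAR : 5*(E:ℝ) ≤ 8*(E1:ℝ) := by exact_mod_cast hcaseA
      have hE1pos : (0:ℝ) < (E1:ℝ) := by linarith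
      have hE1lb : (5/4)*α*(m:ℝ)*Real.sqrt m ≤ (E1:ℝ) := by linarith
      have hαsm : 200 ≤ α * Real.sqrt (m:ℝ) :=
        le_trans (by norm_num) (mul_le_mul hα hs20 (by norm_num) (le_of_lt hαpos))
      have hE1_250 : 250*(m1:ℝ) ≤ (E1:ℝ) := by nlinarith
      have hE1_m32 : 25*(m1:ℝ)*Real.sqrt (m1:ℝ) ≤ 2*(E1:ℝ) := by
        have h1 : (m1:ℝ)*Real.sqrt (m1:ℝ) ≤ (m:ℝ)*Real.sqrt (m:ℝ) := by
          apply mul_le_mul hm1leR hs1le (le_of_lt hs1pos) (by linarith)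
        nlinarith
      set T0 := Nat.sqrt (E1^2 / (64 * m1^3)) with hT0def
      clear_value T0
      have hT0prop : ∀ c : ℕ, ¬ (E1^2 ≤ 64*m1^3*c^2) → c ≤ T0 := by
        intro c hc
        have h1 : 64*m1^3*c^2 < E1^2 := Nat.lt_of_not_le hc
        rw [hT0def]
        apply Nat.le_sqrt.2
        apply (Nat.le_div_iff_mul_le (by positivity)).2
        have e : c*c*(64*m1^3) = 64*m1^3*c^2 := by ring
        rw [e]
        exact le_of_lt h1
      have hT0sq : T0*T0*(64*m1^3) ≤ E1^2 := by
        have h1 : T0*T0 ≤ E1^2/(64*m1^3) := by rw [hT0def]; exact Nat.sqrt_le _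
        calc T0*T0*(64*m1^3) ≤ (E1^2/(64*m1^3))*(64*m1^3) := Nat.mul_le_mul_right _ h1
          _ ≤ E1^2 := Nat.div_mul_le_self _ _
      have hT0R : 8*(m1:ℝ)*Real.sqrt (m1:ℝ)*(T0:ℝ) ≤ (E1:ℝ) := by
        have hc : ((T0:ℝ)*(T0:ℝ))*(64*(m1:ℝ)^3) ≤ (E1:ℝ)^2 := by
          exact_mod_cast hT0sq
        have hsq' : (8*(m1:ℝ)*Real.sqrt (m1:ℝ)*(T0:ℝ))^2 = ((T0:ℝ)*(T0:ℝ))*(64*(m1:ℝ)^3) := by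
          rw [show (8*(m1:ℝ)*Real.sqrt (m1:ℝ)*(T0:ℝ))^2
            = 64*(m1:ℝ)^2*((Real.sqrt (m1:ℝ))^2)*(T0:ℝ)^2 from by ring, hsq1]
          ring
        apply le_of_pow_le_pow_left₀ (n := 2) (by norm_num) (by positivity)
        rw [hsq']
        exact hc
      have hdgS1 : ∀ v ∈ S1, m * (nb G v ∩ S).card ≤ 320*E := by
        intro v hv
        have hvT : v ∉ T := (mem_sdiff.1 hv).2
        rw [hT, mem_filter] at hvT
        push_neg at hvT
        exact hvT (mem_sdiff.1 hv).1
      obtain ⟨A2, H2, k2, hA2sub, hH2le, hin2, hINVa2, hINVb2, hmind, hpairs⟩ :=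
        phase2 S1 (rG G S1) m1 E1 T0 hm1def.symm hT0prop (S1.card + EC (rG G S1)) S1 (rG G S1) 0
          le_rfl (le_refl _) (fun a b h => rG_edges_in G S1 h) (Finset.Subset.refl S1)
          (by rw [show m1 - S1.card = 0 from by omega, ← hE1def]; simp)
          (by simp)
      set m2 := A2.card with hm2def
      set E2 := EC H2 with hE2def
      clear_value m2 E2
      have hm2le : m2 ≤ m1 := by rw [hm2def, hm1def]; exact card_le_card hA2sub
      have hm2leR : (m2:ℝ) ≤ (m1:ℝ) := by exact_mod_cast hm2le
      have hINVaR : 2*(m1:ℝ)*(E1:ℝ) ≤ 2*(m1:ℝ)*(E2:ℝ) + ((m1:ℝ) - (m2:ℝ))*(E1:ℝ)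
          + 4*(m1:ℝ)*(k2:ℝ) := by
        have hc := (Nat.cast_le (α := ℝ)).2 hINVa2
        push_cast [Nat.cast_sub hm2le] at hc
        convert hc using 2 <;> push_cast <;> ring
      have hINVbR : (k2:ℝ)*(E1:ℝ) ≤ 8*(k2:ℝ)*(m1:ℝ)
          + 4*(m1:ℝ)*((PHI S1 T0 (rG G S1)):ℝ) := by
        have hc := (Nat.cast_le (α := ℝ)).2 hINVb2
        push_cast at hc
        have hnn : (0:ℝ) ≤ 4*(m1:ℝ)*((PHI S1 T0 H2):ℝ) := by positivity
        nlinarith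
      have hΦ0 : ((PHI S1 T0 (rG G S1)):ℝ) ≤ (m1:ℝ)*(m1:ℝ)*(T0:ℝ) := by
        have := PHI_le S1 T0 (rG G S1)
        rw [← hm1def] at this
        exact_mod_cast this
      have hknn : (0:ℝ) ≤ (k2:ℝ) := Nat.cast_nonneg _
      have hT0nn : (0:ℝ) ≤ (T0:ℝ) := Nat.cast_nonneg _
      have hk24 : 24*(k2:ℝ) ≤ (E1:ℝ) := by
        have step1 : 8*(m1:ℝ)^3*(T0:ℝ) ≤ (E1:ℝ)*((m1:ℝ)*Real.sqrt (m1:ℝ)) := by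
          have h := mul_le_mul_of_nonneg_right hT0R
            (by positivity : (0:ℝ) ≤ (m1:ℝ)*Real.sqrt (m1:ℝ))
          have e : (8*(m1:ℝ)*Real.sqrt (m1:ℝ)*(T0:ℝ))*((m1:ℝ)*Real.sqrt (m1:ℝ))
              = 8*(m1:ℝ)^2*((Real.sqrt (m1:ℝ))^2)*(T0:ℝ) := by ring
          rw [e, hsq1] at h
          calc 8*(m1:ℝ)^3*(T0:ℝ) = 8*(m1:ℝ)^2*(m1:ℝ)*(T0:ℝ) := by ring
            _ ≤ (E1:ℝ)*((m1:ℝ)*Real.sqrt (m1:ℝ)) := h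
        have step3 : 8*(m1:ℝ)^3*(T0:ℝ) ≤ (2/25)*(E1:ℝ)*(E1:ℝ) := by nlinarith
        have step4 : (k2:ℝ)*((E1:ℝ) - 8*(m1:ℝ)) ≤ (1/25)*(E1:ℝ)^2 := by nlinarith
        have step5 : (121/125)*(E1:ℝ) ≤ (E1:ℝ) - 8*(m1:ℝ) := by linarith
        have h6 : (k2:ℝ)*((121/125)*(E1:ℝ)) ≤ (1/25)*(E1:ℝ)^2 := by nlinarith
        have h7 : (24*(k2:ℝ))*(E1:ℝ) ≤ (E1:ℝ)*(E1:ℝ) := by nlinarith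
        exact le_of_mul_le_mul_right h7 hE1pos
      have hE2lb : 2*(E1:ℝ) ≤ 5*(E2:ℝ) := by
        have hm2nn : (0:ℝ) ≤ (m2:ℝ) := Nat.cast_nonneg _
        have h1 : (m1:ℝ)*(E1:ℝ) ≤ (m1:ℝ)*(2*(E2:ℝ) + 4*(k2:ℝ)) := by nlinarith
        have h2 : (E1:ℝ) ≤ 2*(E2:ℝ) + 4*(k2:ℝ) := (mul_le_mul_iff_right₀ hm1posR).1 h1
        linarith
      have hE2pos : (0:ℝ) < (E2:ℝ) := by linarith
      have hE2posℕ : 0 < E2 := by exact_mod_cast hE2pos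
      have hm21 : 1 ≤ m2 := by
        obtain ⟨u, v, huv⟩ := adj_of_EC_pos (by omega : 0 < EC H2)
        rw [hm2def]
        exact card_pos.2 ⟨u, (hin2 u v huv).1⟩
      have hm2posR : (0:ℝ) < (m2:ℝ) := by exact_mod_cast hm21
      have hs2pos : 0 < Real.sqrt (m2:ℝ) := Real.sqrt_pos.2 hm2posR
      have hsq2 : (Real.sqrt (m2:ℝ))^2 = (m2:ℝ) := Real.sq_sqrt (le_of_lt hm2posR)
      have hs2le : Real.sqrt (m2:ℝ) ≤ Real.sqrt (m1:ℝ) := Real.sqrt_le_sqrt hm2leR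
      have hdgH2 : ∀ v ∈ A2, m * dg H2 v ≤ 320*E := by
        intro v hv
        have hvS1 : v ∈ S1 := hA2sub hv
        have h1 : dg H2 v ≤ dg (rG G S1) v := dg_mono hH2le v
        have h2 : dg (rG G S1) v = (nb G v ∩ S1).card := dg_rG_eq G S1 hvS1
        have h3 : (nb G v ∩ S1).card ≤ (nb G v ∩ S).card :=
          card_le_card (inter_subset_inter (Finset.Subset.refl _) sdiff_subset)
        calc m * dg H2 v ≤ m * (nb G v ∩ S).card := Nat.mul_le_mul_left _ (by omega)
          _ ≤ 320*E := hdgS1 v hvS1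
      have hdg0 : ∀ v, v ∉ A2 → dg H2 v = 0 := by
        intro v hv
        rw [dg_def, card_eq_zero]
        ext w
        simp only [mem_nb, notMem_empty, iff_false]
        intro h
        exact hv (hin2 v w h).1
      have hmE2 : m * E2 ≤ m2 * (320*E) := by
        have hsum : EC H2 = ∑ v ∈ A2, dg H2 v := by
          rw [EC]
          exact (Finset.sum_subset (subset_univ A2) (fun v _ hv => hdg0 v hv)).symm
        calc m * E2 = ∑ v ∈ A2, m * dg H2 v := by rw [hE2def, hsum, Finset.mul_sum]
          _ ≤ ∑ _v ∈ A2, 320*E := Finset.sum_le_sum (fun v hv => hdgH2 v hv)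
          _ = m2 * (320*E) := by rw [Finset.sum_const, smul_eq_mul, hm2def]
      have hmE2R : (m:ℝ) * (E2:ℝ) ≤ (m2:ℝ) * (320*(E:ℝ)) := by exact_mod_cast hmE2
      have hH2G : H2 ≤ G := fun a b h => (hH2le h).1
      by_cases hntr : 640*(E:ℝ)*(m1:ℝ)*Real.sqrt (m1:ℝ)
          ≤ 3000*(E1:ℝ)*Real.sqrt (m2:ℝ)*(m:ℝ)
      · -- no trigger : we are done, produce the subgraph
        set c14 : ℝ := (E1:ℝ)/(8*(m1:ℝ)*Real.sqrt (m1:ℝ)) with hc14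
        clear_value c14
        have hc14pos : 0 < c14 := by rw [hc14]; positivity
        set α' := max (α/20) (320*(E:ℝ)/((m:ℝ)*12000*Real.sqrt (m2:ℝ))) with hα'
        clear_value α'
        have hα'1 : α/20 ≤ α' := by rw [hα']; exact le_max_left _ _
        have hα'pos : 0 < α' := lt_of_lt_of_le (by linarith) hα'1
        have hc14a : α/20 ≤ c14 := by
          rw [hc14, le_div_iff₀ (show (0:ℝ) < 8*(m1:ℝ)*Real.sqrt (m1:ℝ) by positivity)]
          have h1 : (m1:ℝ)*Real.sqrt (m1:ℝ) ≤ (m:ℝ)*Real.sqrt (m:ℝ) :=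
            mul_le_mul hm1leR hs1le (le_of_lt hs1pos) (by linarith)
          have hE1lb' : (5/4)*α*((m:ℝ)*Real.sqrt (m:ℝ)) ≤ (E1:ℝ) := by linarith [hE1lb]
          have := arith_c14a hα h1 hE1lb' (by positivity : (0:ℝ) ≤ (m1:ℝ)*Real.sqrt (m1:ℝ))
          calc α/20 * (8*(m1:ℝ)*Real.sqrt (m1:ℝ)) = α/20 * (8*((m1:ℝ)*Real.sqrt (m1:ℝ))) := by ring
            _ ≤ (E1:ℝ) := this
        have hc14b : 320*(E:ℝ)/((m:ℝ)*12000*Real.sqrt (m2:ℝ)) ≤ c14 := by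
          rw [hc14, div_le_div_iff₀
            (show (0:ℝ) < (m:ℝ)*12000*Real.sqrt (m2:ℝ) by positivity)
            (show (0:ℝ) < 8*(m1:ℝ)*Real.sqrt (m1:ℝ) by positivity)]
          have := arith_c14b hntr
          calc 320*(E:ℝ)*(8*(m1:ℝ)*Real.sqrt (m1:ℝ))
              = 320*(E:ℝ)*(8*((m1:ℝ)*Real.sqrt (m1:ℝ))) := by ring
            _ ≤ (E1:ℝ)*((m:ℝ)*12000*Real.sqrt (m2:ℝ)) := this
        have hα'le : α' ≤ c14 := by rw [hα']; exact max_le hc14a hc14b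
        refine ⟨A2, H2, α', hH2G, hin2, by omega, hα'1, ?_, ?_, ?_, ?_⟩
        · -- edge count
          rw [← hm2def, ← hE2def]
          have h1 : α' * (m2:ℝ) * Real.sqrt (m2:ℝ) ≤ c14 * ((m1:ℝ) * Real.sqrt (m1:ℝ)) := by
            have hmm : (m2:ℝ)*Real.sqrt (m2:ℝ) ≤ (m1:ℝ)*Real.sqrt (m1:ℝ) :=
              mul_le_mul hm2leR hs2le (le_of_lt hs2pos) (by linarith)
            calc α' * (m2:ℝ) * Real.sqrt (m2:ℝ) = α' * ((m2:ℝ) * Real.sqrt (m2:ℝ)) := by ring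
              _ ≤ c14 * ((m1:ℝ) * Real.sqrt (m1:ℝ)) :=
                  mul_le_mul hα'le hmm (by positivity) (le_of_lt hc14pos)
          have h2 : c14 * ((m1:ℝ) * Real.sqrt (m1:ℝ)) = (E1:ℝ)/8 := by
            rw [hc14]
            field_simp
          rw [h2] at h1
          linarith
        · -- max degree
          rw [← hm2def]
          intro v
          by_cases hv : v ∈ A2
          · have h1 : (m:ℝ) * (dg H2 v : ℝ) ≤ 320*(E:ℝ) := by exact_mod_cast hdgH2 v hv
            have h2 : (dg H2 v : ℝ) ≤ 320*(E:ℝ)/(m:ℝ) := by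
              rw [le_div_iff₀ hmpos]
              linarith [h1]
            have h3 : 320*(E:ℝ)/((m:ℝ)*12000*Real.sqrt (m2:ℝ)) ≤ α' := by rw [hα']; exact le_max_right _ _
            have h4 : 320*(E:ℝ)/(m:ℝ) ≤ 12000 * α' * Real.sqrt (m2:ℝ) := by
              rw [div_le_iff₀ hmpos]
              have hb : (0:ℝ) < (m:ℝ)*12000*Real.sqrt (m2:ℝ) := by positivity
              have h5 := mul_le_mul_of_nonneg_right h3 (le_of_lt hb)
              rw [div_mul_cancel₀ _ (ne_of_gt hb)] at h5
              have h6 : α' * ((m:ℝ)*12000*Real.sqrt (m2:ℝ))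
                  = 12000 * α' * Real.sqrt (m2:ℝ) * (m:ℝ) := by ring
              rw [h6] at h5
              exact h5
            linarith
          · rw [hdg0 v hv]
            have : (0:ℝ) ≤ 12000 * α' * Real.sqrt (m2:ℝ) := by positivity
            simpa using this
        · -- codegree condition
          rw [← hm2def]
          intro u v huv
          have hHC := hpairs u v huv
          have hHCR : (E1:ℝ) ≤ 8*(m1:ℝ)*((HC m1 E1 H2 u v : ℕ):ℝ) := by exact_mod_cast hHC
          have hsubHC : ((nb H2 u).filter fun w => E1^2 ≤ 64 * m1^3 * (cdg H2 v w)^2)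
              ⊆ univ.filter fun w => H2.Adj u w ∧ α' ≤ (cdg H2 v w : ℝ) := by
            intro w hw
            obtain ⟨hw1, hw2⟩ := mem_filter.1 hw
            refine mem_filter.2 ⟨mem_univ _, mem_nb.1 hw1, ?_⟩
            -- heavy ⟹ cdg ≥ c14 ≥ α'
            have hcast : (E1:ℝ)^2 ≤ 64 * (m1:ℝ)^3 * ((cdg H2 v w : ℕ):ℝ)^2 := by
              exact_mod_cast hw2
            have hcd : c14 ≤ ((cdg H2 v w : ℕ):ℝ) := by
              rw [hc14, div_le_iff₀ (by positivity)]
              have h8 : (8*(m1:ℝ)*Real.sqrt (m1:ℝ)*((cdg H2 v w : ℕ):ℝ))^2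
                  = 64 * (m1:ℝ)^3 * ((cdg H2 v w : ℕ):ℝ)^2 := by
                rw [show (8*(m1:ℝ)*Real.sqrt (m1:ℝ)*((cdg H2 v w : ℕ):ℝ))^2
                  = 64*(m1:ℝ)^2*((Real.sqrt (m1:ℝ))^2)*((cdg H2 v w : ℕ):ℝ)^2 from by ring, hsq1]
                ring
              have h9 : (E1:ℝ)^2 ≤ (8*(m1:ℝ)*Real.sqrt (m1:ℝ)*((cdg H2 v w : ℕ):ℝ))^2 := by
                rw [h8]; exact hcast
              have := le_of_pow_le_pow_left₀ (n := 2) (by norm_num) (by positivity) h9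
              linarith
            linarith [hα'le]
          have hcard := card_le_card hsubHC
          have hcardR : ((HC m1 E1 H2 u v : ℕ):ℝ)
              ≤ ((univ.filter fun w => H2.Adj u w ∧ α' ≤ (cdg H2 v w : ℝ)).card : ℝ) := by
            exact_mod_cast hcard
          have hkey : α' * Real.sqrt (m2:ℝ) ≤ (E1:ℝ)/(8*(m1:ℝ)) := by
            have h1 : α' * Real.sqrt (m2:ℝ) ≤ c14 * Real.sqrt (m1:ℝ) :=
              mul_le_mul hα'le hs2le (le_of_lt hs2pos) (le_of_lt hc14pos)
            have h2 : c14 * Real.sqrt (m1:ℝ) = (E1:ℝ)/(8*(m1:ℝ)) := by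
              rw [hc14]
              rw [div_mul_eq_mul_div, div_eq_div_iff (by positivity) (by positivity)]
              calc (E1:ℝ) * Real.sqrt (m1:ℝ) * (8*(m1:ℝ))
                  = (E1:ℝ) * 8 * (m1:ℝ) * Real.sqrt (m1:ℝ) := by ring
                _ = (E1:ℝ) * (8*(m1:ℝ)*Real.sqrt (m1:ℝ)) := by ring
            rw [h2] at h1
            exact h1
          have hHC2 : (E1:ℝ)/(8*(m1:ℝ)) ≤ ((HC m1 E1 H2 u v : ℕ):ℝ) := by
            rw [div_le_iff₀ (by positivity)]
            linarith [hHCR]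
          linarith
        · -- size bound
          rw [← hn, ← hm2def]
          have hX : (2*α)^42 * (n:ℝ)^2 ≤ (m:ℝ)^23 := by
            have h1 : (E:ℝ)^42 ≤ ((m:ℝ)*(m:ℝ))^42 :=
              pow_le_pow_left₀ (by positivity) hEle 42
            have h2 : (2*α)^42 * (n:ℝ)^2 * (m:ℝ)^61 ≤ (m:ℝ)^23 * (m:ℝ)^61 := by
              calc (2*α)^42 * (n:ℝ)^2 * (m:ℝ)^61 ≤ (E:ℝ)^42 := hPOT
                _ ≤ ((m:ℝ)*(m:ℝ))^42 := h1
                _ = (m:ℝ)^23 * (m:ℝ)^61 := by ring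
            exact le_of_mul_le_mul_right h2 (by positivity)
          have hm1280 : (m:ℝ) ≤ 1280*(m2:ℝ) := by
            -- m * E/4 ≤ m * E2 ≤ 320 m2 E
            have h1 : (E:ℝ) ≤ 4*(E2:ℝ) := by linarith
            have h2 : (m:ℝ)*(E:ℝ) ≤ 1280*(m2:ℝ)*(E:ℝ) := by
              have h2E : (m:ℝ)*(E2:ℝ) ≤ (m2:ℝ)*(320*(E:ℝ)) := hmE2R
              exact arith_m1280 h1 h2E (le_of_lt hmpos) hEposR
            exact le_of_mul_le_mul_right h2 hEposR
          calc (2*α)^42 * (n:ℝ)^2 ≤ (m:ℝ)^23 := hX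
            _ ≤ (1280*(m2:ℝ))^23 := pow_le_pow_left₀ (by positivity) hm1280 23
            _ = 1280^23 * (m2:ℝ)^23 := by rw [mul_pow]
      · -- trigger : recurse on A2
        push_neg at hntr
        have h8m2 : 8 * m2 ≤ m := by
          have := arith_trigger hntr hcaseAR hm1leR hs1le hsq hsq2
            (le_of_lt hs1pos) (le_of_lt hs2pos) (le_of_lt hspos) hEposR hmpos
            (le_of_lt hm1posR)
          exact_mod_cast this
        have hm2lt : m2 < m := by omega
        have hH2A2 : H2 ≤ rG G A2 := fun a b h =>
          ⟨hH2G h, (hin2 a b h).1, (hin2 a b h).2⟩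
        have hEA2 : E2 ≤ EC (rG G A2) := by rw [hE2def]; exact EC_mono hH2A2
        apply ih A2 (by omega) (by omega)
        rw [← hm2def]
        have hcast : (E2:ℝ) ≤ ((EC (rG G A2)):ℝ) := by exact_mod_cast hEA2
        have hE4 : (E:ℝ) ≤ 4*(E2:ℝ) := by linarith
        have hXnn : (0:ℝ) ≤ (2*α)^42 * (n:ℝ)^2 := by positivity
        have key := arith_pot_trigger hXnn
          (by
            calc (2*α)^42 * (n:ℝ)^2 * (m:ℝ)^61 ≤ (E:ℝ)^42 := hPOT)
          hE4 hcast (by exact_mod_cast h8m2) (Nat.cast_nonneg m2) (le_of_lt hEposR)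
        exact key
    · -- CASE B
      have hcaseB : 8*E1 < 5*E := Nat.lt_of_not_le (by omega)
      have hτ1 : 1 ≤ τ := by
        by_contra hcon
        have hτ0 : τ = 0 := by omega
        have hT0' : T = ∅ := card_eq_zero.1 (by omega : T.card = 0)
        have hSS : S1 = S := by rw [hS1def, hT0', sdiff_empty]
        have : E1 = E := by rw [hE1def, hSS, ← hE]
        omega
      have hXnn : (0:ℝ) ≤ (2*α)^42 * (n:ℝ)^2 := by positivity
      have hτmR : 320*(τ:ℝ) ≤ (m:ℝ) := by exact_mod_cast le_of_lt hτm
      by_cases hB1 : 3*E ≤ 16 * EC (rG G T)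
      · -- recurse on T
        apply ih T (by omega) (by omega)
        rw [← hτdef]
        have hETR : 3*(E:ℝ) ≤ 16*((EC (rG G T)):ℝ) := by exact_mod_cast hB1
        exact arith_pot_B1 hXnn hPOT hETR hτmR (Nat.cast_nonneg τ) (le_of_lt hEposR)
      · -- B2 : bipartite-ish jump
        have hB1' : 16 * EC (rG G T) < 3*E := Nat.lt_of_not_le hB1
        have hcr : 3*E ≤ 32*(∑ v ∈ S1, (nb G v ∩ T).card) := by omega
        obtain ⟨U, hUsub, hUcard, hUsum⟩ :=
          topk (2*τ) S1 (fun v => (nb G v ∩ T).card) (by omega)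
        set S2 := T ∪ U with hS2def
        have hdisj2 : Disjoint T U := by
          rw [Finset.disjoint_right]
          intro x hxU
          exact (mem_sdiff.1 (hUsub hxU)).2
        have hS2card : S2.card = 3*τ := by
          rw [hS2def, card_union_of_disjoint hdisj2, hUcard]
          omega
        have hm1leB : m1 ≤ m := by omega
        have hsplit2 : EC (rG G (T ∪ U))
            = EC (rG G T) + EC (rG G U) + 2*∑ v ∈ T, (nb G v ∩ U).card :=
          EC_rG_split G hdisj2
        have hcomm : ∑ v ∈ T, (nb G v ∩ U).card = ∑ v ∈ U, (nb G v ∩ T).card :=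
          sum_nb_comm G T U
        have hcross : 2*∑ v ∈ U, (nb G v ∩ T).card ≤ EC (rG G S2) := by
          rw [hS2def, hsplit2, hcomm]
          omega
        have hkey : 3*τ*E ≤ 8*m*(EC (rG G S2)) := by
          have t1 : 3*τ*E ≤ 16*(2*τ*(∑ v ∈ S1, (nb G v ∩ T).card)) := by
            calc 3*τ*E = τ*(3*E) := by ring
              _ ≤ τ*(32*(∑ v ∈ S1, (nb G v ∩ T).card)) := Nat.mul_le_mul_left τ hcr
              _ = 16*(2*τ*(∑ v ∈ S1, (nb G v ∩ T).card)) := by ring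
          have t2 : 2*τ*(∑ v ∈ S1, (nb G v ∩ T).card)
              ≤ m1*(∑ v ∈ U, (nb G v ∩ T).card) := by rw [hm1def]; exact hUsum
          have t3 : m1*(∑ v ∈ U, (nb G v ∩ T).card)
              ≤ m*(∑ v ∈ U, (nb G v ∩ T).card) := Nat.mul_le_mul_right _ hm1leB
          calc 3*τ*E ≤ 16*(2*τ*(∑ v ∈ S1, (nb G v ∩ T).card)) := t1
            _ ≤ 16*(m1*(∑ v ∈ U, (nb G v ∩ T).card)) := Nat.mul_le_mul_left _ t2
            _ ≤ 16*(m*(∑ v ∈ U, (nb G v ∩ T).card)) := Nat.mul_le_mul_left _ t3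
            _ = 8*m*(2*(∑ v ∈ U, (nb G v ∩ T).card)) := by ring
            _ ≤ 8*m*(EC (rG G S2)) := Nat.mul_le_mul_left _ hcross
        apply ih S2 (by omega) (by rw [hS2card]; omega)
        have hkeyR : 3*(τ:ℝ)*(E:ℝ) ≤ 8*(m:ℝ)*((EC (rG G S2)):ℝ) := by exact_mod_cast hkey
        have hfin := arith_pot_B2 hXnn hPOT hkeyR hτmR (Nat.cast_nonneg τ)
          (le_of_lt hEposR) hmpos (Nat.cast_nonneg _)
        rw [hS2card]
        push_cast
        push_cast at hfin
        exact hfin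



lemma dg_zero_outside {H : SimpleGraph V} {A : Finset V}
    (hin : ∀ a b, H.Adj a b → a ∈ A ∧ b ∈ A) {v : V} (hv : v ∉ A) : dg H v = 0 := by
  rw [dg_def, card_eq_zero]
  ext w
  simp only [mem_nb, notMem_empty, iff_false]
  intro h
  exact hv (hin v w h).1

lemma EC_eq_twice (H : SimpleGraph V) : EC H = 2 * H.edgeSet.ncard := by
  have h2 : ∀ v, dg H v = H.degree v := by
    intro v
    rw [dg_def, SimpleGraph.degree]
    congr 1
    ext w
    simp [nb, SimpleGraph.mem_neighborFinset]
  have h1 : ∑ v, H.degree v = 2 * H.edgeFinset.card :=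
    SimpleGraph.sum_degrees_eq_twice_card_edges H
  have h3 : H.edgeFinset.card = H.edgeSet.ncard := by
    rw [← SimpleGraph.coe_edgeFinset, Set.ncard_coe_finset]
  rw [EC]
  calc ∑ v, dg H v = ∑ v, H.degree v := Finset.sum_congr rfl fun v _ => h2 v
    _ = 2 * H.edgeFinset.card := h1
    _ = 2 * H.edgeSet.ncard := by rw [h3]

end FC

set_option maxRecDepth 100000 in
open FC in
/-- Lemma 2.3: for `α ≥ 10` and `n` sufficiently large, every `n`-vertex graph
`G` with at least `α n^{3/2}` edges has a subgraph `H` on `m ≥ n^{1/12}`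
vertices such that, for some `α' ≥ α/20`: `e(H) ≥ α' m^{3/2}`,
`Δ(H) ≤ 12000 α' m^{1/2}`, and for every edge `uv` of `H`, `u` has at least
`α' m^{1/2}` neighbours `w` in `H` with `d_H(v,w) ≥ α'`. -/
theorem final_cleaning (α : ℝ) (hα : 10 ≤ α) :
    ∃ N : ℕ, ∀ n : ℕ, N ≤ n → ∀ (V : Type) (_ : Fintype V),
      Fintype.card V = n → ∀ G : SimpleGraph V,
        α * (n : ℝ) ^ ((3 : ℝ) / 2) ≤ (G.edgeSet.ncard : ℝ) →
          ∃ (s : Finset V) (H : SimpleGraph s), H ≤ G.induce (s : Set V) ∧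
            (n : ℝ) ^ ((1 : ℝ) / 12) ≤ (s.card : ℝ) ∧
            ∃ α' : ℝ, α / 20 ≤ α' ∧
              α' * (s.card : ℝ) ^ ((3 : ℝ) / 2) ≤ (H.edgeSet.ncard : ℝ) ∧
              (∀ v : s, ((H.neighborSet v).ncard : ℝ) ≤
                12000 * α' * (s.card : ℝ) ^ ((1 : ℝ) / 2)) ∧
              ∀ u v : s, H.Adj u v →
                α' * (s.card : ℝ) ^ ((1 : ℝ) / 2) ≤
                  (({w : s | H.Adj u w ∧ α' ≤ (codeg H v w : ℝ)}).ncard : ℝ) := by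
  classical
  have h32 : ∀ x : ℝ, 0 < x → x^((3:ℝ)/2) = x * Real.sqrt x := by
    intro x hx
    rw [show (3:ℝ)/2 = 1 + 1/2 by norm_num, Real.rpow_add hx, Real.rpow_one,
      Real.sqrt_eq_rpow]
  have h12 : ∀ x : ℝ, x^((1:ℝ)/2) = Real.sqrt x := by
    intro x
    rw [Real.sqrt_eq_rpow]
  refine ⟨10^300, ?_⟩
  intro n hn V instF hcard G hedges
  have hn1 : 1 ≤ n := le_trans (Nat.one_le_pow _ _ (by norm_num)) hn
  have hnpos : (0:ℝ) < (n:ℝ) := by exact_mod_cast hn1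
  have hsqn : (Real.sqrt (n:ℝ))^2 = (n:ℝ) := Real.sq_sqrt (le_of_lt hnpos)
  -- set up the potential for the whole vertex set
  have hrGuniv : rG G Finset.univ = G := by
    ext a b
    simp [rG]
  have hEC : (EC G : ℝ) = 2 * (G.edgeSet.ncard : ℝ) := by exact_mod_cast EC_eq_twice G
  have hd : 2*α*(n:ℝ)*Real.sqrt (n:ℝ) ≤ (EC G : ℝ) := by
    rw [hEC]
    rw [h32 (n:ℝ) hnpos] at hedges
    linarith
  have hPOT : (2*α)^42 * (Fintype.card V : ℝ)^2 * ((Finset.univ : Finset V).card : ℝ)^61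
      ≤ (EC (rG G Finset.univ) : ℝ)^42 := by
    rw [hrGuniv, Finset.card_univ, hcard]
    have h1 : (2*α*(n:ℝ)*Real.sqrt (n:ℝ))^42
        = (2*α)^42 * (n:ℝ)^42 * ((Real.sqrt (n:ℝ))^2)^21 := by ring
    have h2 : (2*α*(n:ℝ)*Real.sqrt (n:ℝ))^42 ≤ (EC G : ℝ)^42 :=
      pow_le_pow_left₀ (by positivity) hd 42
    rw [h1, hsqn] at h2
    calc (2*α)^42 * (n:ℝ)^2 * (n:ℝ)^61 = (2*α)^42 * (n:ℝ)^42 * (n:ℝ)^21 := by ring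
      _ ≤ (EC G : ℝ)^42 := h2
  obtain ⟨s, H, α', hHG, hin, hs1, hα'20, hecnt, hdeg, hcodeg3, hsize⟩ :=
    outer G α hα (Fintype.card V) Finset.univ le_rfl
      (by rw [Finset.card_univ, hcard]; omega) hPOT
  -- translate to the subtype graph
  have hs1R : (1:ℝ) ≤ (s.card : ℝ) := by exact_mod_cast hs1
  have hscpos : (0:ℝ) < (s.card : ℝ) := by linarith
  set Hs : SimpleGraph s := SimpleGraph.comap (fun (a : s) => (a : V)) H with hHs
  have hHsAdj : ∀ a b : s, Hs.Adj a b ↔ H.Adj ↑a ↑b := fun a b => Iff.rfl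
  have hα'pos : 0 < α' := by linarith
  -- dg transfer
  have hdgs : ∀ a : s, dg Hs a = dg H ↑a := by
    intro a
    rw [dg_def, dg_def]
    apply Finset.card_bij (fun (b : s) _ => (b : V))
    · intro b hb
      rw [mem_nb] at hb ⊢
      exact hb
    · intro b _ c _ h
      exact Subtype.ext h
    · intro w hw
      rw [mem_nb] at hw
      exact ⟨⟨w, (hin _ _ hw).2⟩, mem_nb.2 hw, rfl⟩
  have hECs : EC Hs = EC H := by
    calc EC Hs = ∑ a : s, dg H ↑a := Finset.sum_congr rfl fun a _ => hdgs a
      _ = ∑ v ∈ s, dg H v := Finset.sum_coe_sort s (dg H)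
      _ = ∑ v, dg H v := Finset.sum_subset (subset_univ s)
            (fun v _ hv => dg_zero_outside hin hv)
      _ = EC H := rfl
  have hncard : 2 * (Hs.edgeSet.ncard : ℝ) = (EC H : ℝ) := by
    have := EC_eq_twice Hs
    rw [hECs] at this
    exact_mod_cast this.symm
  -- codeg transfer
  have hcodegs : ∀ v w : s, codeg Hs v w = cdg H ↑v ↑w := by
    intro v w
    rw [codeg, cdg, Set.ncard_eq_toFinset_card']
    apply Finset.card_bij (fun (b : s) _ => (b : V))
    · intro b hb
      simp only [Set.mem_toFinset, Set.mem_inter_iff, SimpleGraph.mem_neighborSet] at hb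
      rw [mem_inter, mem_nb, mem_nb]
      exact hb
    · intro b _ c _ h
      exact Subtype.ext h
    · intro x hx
      rw [mem_inter, mem_nb, mem_nb] at hx
      refine ⟨⟨x, (hin _ _ hx.1).2⟩, ?_, rfl⟩
      simp only [Set.mem_toFinset, Set.mem_inter_iff, SimpleGraph.mem_neighborSet]
      exact hx
  refine ⟨s, Hs, ?_, ?_, α', hα'20, ?_, ?_, ?_⟩
  · -- Hs ≤ induce
    intro a b hab
    simp only [SimpleGraph.comap_adj] at hab ⊢
    exact hHG hab
  · -- size
    have hsizeR := hsize
    rw [hcard] at hsizeR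
    have h2α : (20:ℝ) ≤ 2*α := by linarith
    have hA := hsizeR
    -- (20)^42 n^2 ≤ 1280^23 * sc^23
    have h20 : (20:ℝ)^42 * (n:ℝ)^2 ≤ 1280^23 * (s.card:ℝ)^23 := by
      have : (20:ℝ)^42 ≤ (2*α)^42 := pow_le_pow_left₀ (by norm_num) h2α 42
      nlinarith [sq_nonneg ((n:ℝ)), pow_nonneg (le_of_lt hnpos) 2]
    have h2 : ((20:ℝ)^42 * (n:ℝ)^2)^12 ≤ ((1280:ℝ)^23 * (s.card:ℝ)^23)^12 :=
      pow_le_pow_left₀ (by positivity) h20 12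
    have h3 : (20:ℝ)^504 * (n:ℝ)^24 ≤ (1280:ℝ)^276 * (s.card:ℝ)^276 := by
      calc (20:ℝ)^504 * (n:ℝ)^24 = ((20:ℝ)^42 * (n:ℝ)^2)^12 := by rw [mul_pow, ← pow_mul, ← pow_mul]
        _ ≤ ((1280:ℝ)^23 * (s.card:ℝ)^23)^12 := h2
        _ = (1280:ℝ)^276 * (s.card:ℝ)^276 := by rw [mul_pow, ← pow_mul, ← pow_mul]
    have hnN : (10:ℝ)^300 ≤ (n:ℝ) := by exact_mod_cast hn
    have h4 : (1280:ℝ)^276 ≤ (20:ℝ)^504 * (n:ℝ) := by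
      calc (1280:ℝ)^276 ≤ (20:ℝ)^504 * (10:ℝ)^300 := by
            have hnum : (1280:ℝ)^138 ≤ (20:ℝ)^252 * (10:ℝ)^150 := by norm_num
            calc (1280:ℝ)^276 = ((1280:ℝ)^138)^2 := by rw [← pow_mul]
              _ ≤ ((20:ℝ)^252 * (10:ℝ)^150)^2 := pow_le_pow_left₀ (by positivity) hnum 2
              _ = (20:ℝ)^504 * (10:ℝ)^300 := by rw [mul_pow, ← pow_mul, ← pow_mul]
        _ ≤ (20:ℝ)^504 * (n:ℝ) := by
            apply mul_le_mul_of_nonneg_left hnN (by positivity)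
    have h5 : (1280:ℝ)^276 * (n:ℝ)^23 ≤ (1280:ℝ)^276 * (s.card:ℝ)^276 := by
      calc (1280:ℝ)^276 * (n:ℝ)^23 ≤ ((20:ℝ)^504 * (n:ℝ)) * (n:ℝ)^23 := by
            apply mul_le_mul_of_nonneg_right h4 (by positivity)
        _ = (20:ℝ)^504 * (n:ℝ)^24 := by ring
        _ ≤ (1280:ℝ)^276 * (s.card:ℝ)^276 := h3
    have h6 : (n:ℝ)^23 ≤ (s.card:ℝ)^276 := by
      have := le_of_mul_le_mul_left h5 (by positivity : (0:ℝ) < (1280:ℝ)^276)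
      exact this
    -- take 276-th roots
    have h7 : ((n:ℝ)^(23:ℕ))^((1:ℝ)/276) ≤ ((s.card:ℝ)^(276:ℕ))^((1:ℝ)/276) :=
      Real.rpow_le_rpow (by positivity) h6 (by norm_num)
    rw [← Real.rpow_natCast (n:ℝ) 23, ← Real.rpow_natCast (s.card:ℝ) 276,
      ← Real.rpow_mul (le_of_lt hnpos), ← Real.rpow_mul (le_of_lt hscpos)] at h7
    norm_num at h7
    first
    | exact h7
    | (convert h7 using 2; norm_num)
    | convert h7 using 2
  · -- edge count
    rw [h32 (s.card:ℝ) hscpos]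
    have h1 : 2 * (α' * (s.card:ℝ) * Real.sqrt (s.card:ℝ)) ≤ 2 * (Hs.edgeSet.ncard : ℝ) := by
      rw [hncard]
      exact hecnt
    linarith
  · -- degrees
    intro v
    rw [h12 (s.card:ℝ)]
    have h1 : (Hs.neighborSet v).ncard = dg H ↑v := by
      rw [Set.ncard_eq_toFinset_card']
      apply Finset.card_bij (fun (b : s) _ => (b : V))
      · intro b hb
        simp only [Set.mem_toFinset, SimpleGraph.mem_neighborSet] at hb
        exact mem_nb.2 hb
      · intro b _ c _ h
        exact Subtype.ext h
      · intro x hx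
        rw [mem_nb] at hx
        refine ⟨⟨x, (hin _ _ hx).2⟩, ?_, rfl⟩
        simp only [Set.mem_toFinset, SimpleGraph.mem_neighborSet]
        exact hx
    rw [h1]
    exact hdeg ↑v
  · -- codegree condition
    intro u v huv
    rw [h12 (s.card:ℝ)]
    have h2 := hcodeg3 ↑u ↑v huv
    have h1 : ({w : s | Hs.Adj u w ∧ α' ≤ (codeg Hs v w : ℝ)}).ncard
        = (univ.filter fun w => H.Adj ↑u w ∧ α' ≤ (cdg H ↑v w : ℝ)).card := by
      rw [Set.ncard_eq_toFinset_card']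
      apply Finset.card_bij (fun (b : s) _ => (b : V))
      · intro b hb
        simp only [Set.mem_toFinset, Set.mem_setOf_eq] at hb
        rw [mem_filter]
        refine ⟨mem_univ _, hb.1, ?_⟩
        rw [← hcodegs v b]
        exact hb.2
      · intro b _ c _ h
        exact Subtype.ext h
      · intro x hx
        rw [mem_filter] at hx
        refine ⟨⟨x, (hin _ _ hx.2.1).2⟩, ?_, rfl⟩
        simp only [Set.mem_toFinset, Set.mem_setOf_eq]
        refine ⟨hx.2.1, ?_⟩
        rw [hcodegs]
        exact hx.2.2
    rw [h1]
    exact h2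
end

section
/- Let t ≥ 2 be an integer, let α be a real number with α ≥ 4t, let K = 12000, let k be a positive integer, and let n be a sufficiently large positive integer. Let G be a simple graph on n vertices such that: (a) e(G) ≥ α·n^{3/2}; (b) Δ(G) ≤ K·α·n^{1/2}; (c) for every edge uv of G, the vertex u has at least α·n^{1/2} neighbours w in G with d_G(v,w) ≥ α. Then there exist real numbers s_1, s_2, …, s_{t−1} ≥ 1 such that the number of (s_1, …, s_{t−1})-good t-ladders in the k-th tensor power G^k is at least α^{tk} · n^{(t/2+1)k} · (∏_{i=1}^{t−1} s_i) / (4^{k+1} · log₂(n^k))^{t−1}. -/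
open SimpleGraph Finset

/-- The `k`-th tensor power of `G`: vertices are `k`-tuples of vertices of `G`,
with two tuples adjacent iff they are adjacent in `G` in every coordinate. -/
def tensorPow {V : Type*} (G : SimpleGraph V) (k : ℕ) : SimpleGraph (Fin k → V) where
  Adj x y := x ≠ y ∧ ∀ j, G.Adj (x j) (y j)
  symm := ⟨fun x y h => ⟨h.1.symm, fun j => (h.2 j).symm⟩⟩
  loopless := ⟨fun x h => h.1 rfl⟩

/-- A `t`-ladder in `H` (vertices indexed from `0` to `t-1`):
`x_i x_{i+1}`, `y_i y_{i+1}` are edges for `i < t-1`, and `x_i y_i` is an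
edge for all `i`. -/
def IsLadder {W : Type*} (H : SimpleGraph W) (t : ℕ) (x y : Fin t → W) : Prop :=
  (∀ i : Fin t, H.Adj (x i) (y i)) ∧
  ∀ (i : Fin t) (h : (i : ℕ) + 1 < t),
    H.Adj (x i) (x ⟨(i : ℕ) + 1, h⟩) ∧ H.Adj (y i) (y ⟨(i : ℕ) + 1, h⟩)

/-- An `(s_0, …, s_{t-2})`-good `t`-ladder in `G^k` (with respect to the
parameter `α`): a `t`-ladder `(x_0, y_0, …, x_{t-1}, y_{t-1})` in `G^k` such
that for each `i < t-1` the codegree of `x_{i+1}` and `y_i` in `G^k` is at most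
`s i`, for each `i < t-1` and each coordinate `j` the codegree of `x_{i+1}(j)`
and `y_i(j)` in `G` is at least `α`, and in each coordinate `j` the `2t`
vertices `x_0(j), …, x_{t-1}(j), y_0(j), …, y_{t-1}(j)` are pairwise distinct. -/
def IsGoodLadder {V : Type*} (G : SimpleGraph V) (k t : ℕ) (α : ℝ) (s : ℕ → ℝ)
    (x y : Fin t → (Fin k → V)) : Prop :=
  IsLadder (tensorPow G k) t x y ∧
  (∀ (i : Fin t) (h : (i : ℕ) + 1 < t),
    (codeg (tensorPow G k) (x ⟨(i : ℕ) + 1, h⟩) (y i) : ℝ) ≤ s i ∧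
    ∀ j : Fin k, α ≤ (codeg G (x ⟨(i : ℕ) + 1, h⟩ j) (y i j) : ℝ)) ∧
  ∀ j : Fin k,
    Function.Injective (fun p : Fin t × Bool => if p.2 then x p.1 j else y p.1 j)

attribute [local instance] Classical.propDecidable

namespace MGL

variable {V : Type} [Fintype V]

lemma tpAdj {k : ℕ} (G : SimpleGraph V) (x y : Fin k → V) :
    (tensorPow G k).Adj x y ↔ x ≠ y ∧ ∀ j, G.Adj (x j) (y j) := Iff.rfl

lemma codeg_comm {W : Type*} (H : SimpleGraph W) (u v : W) : codeg H u v = codeg H v u := by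
  rw [codeg, codeg, Set.inter_comm]

noncomputable instance (G : SimpleGraph V) (v : V) : Fintype (G.neighborSet v) :=
  Subtype.fintype _

lemma codeg_eq_card (G : SimpleGraph V) (u v : V) :
    codeg G u v = ((G.neighborFinset u) ∩ (G.neighborFinset v)).card := by
  rw [codeg, Set.ncard_eq_toFinset_card', Set.toFinset_inter]
  congr 1

lemma ncard_setOf (P : V → Prop) : ({w | P w} : Set V).ncard = (univ.filter P).card := by
  rw [Set.ncard_eq_toFinset_card', Set.toFinset_setOf]

lemma codeg_le_card (G : SimpleGraph V) (u v : V) : codeg G u v ≤ Fintype.card V := by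
  rw [codeg]
  refine le_trans (Set.ncard_le_ncard (Set.subset_univ _) Set.finite_univ) ?_
  simp [Set.ncard_univ, Nat.card_eq_fintype_card]

lemma codeg_tensorPow {k : ℕ} (hk : 0 < k) (G : SimpleGraph V) (x y : Fin k → V) :
    codeg (tensorPow G k) x y = ∏ j, codeg G (x j) (y j) := by
  have h : ((tensorPow G k).neighborSet x ∩ (tensorPow G k).neighborSet y).toFinset
      = Fintype.piFinset (fun j => G.neighborFinset (x j) ∩ G.neighborFinset (y j)) := by
    ext w
    simp only [Set.mem_toFinset, Set.mem_inter_iff, mem_neighborSet, Fintype.mem_piFinset,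
      Finset.mem_inter, mem_neighborFinset, tpAdj]
    constructor
    · rintro ⟨⟨-, h1⟩, ⟨-, h2⟩⟩ j
      exact ⟨h1 j, h2 j⟩
    · intro h
      refine ⟨⟨fun he => (h ⟨0, hk⟩).1.ne (congrFun he _), fun j => (h j).1⟩,
        ⟨fun he => (h ⟨0, hk⟩).2.ne (congrFun he _), fun j => (h j).2⟩⟩
  rw [codeg, Set.ncard_eq_toFinset_card', h, Fintype.card_piFinset]
  exact Finset.prod_congr rfl fun j _ => (codeg_eq_card G (x j) (y j)).symm

lemma card_pairs {k : ℕ} (G : SimpleGraph V) :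
    (univ.filter fun p : (Fin k → V) × (Fin k → V) => ∀ j, G.Adj (p.1 j) (p.2 j)).card
      = (2 * G.edgeFinset.card) ^ k := by
  rw [← Fintype.card_subtype]
  have e1 : {p : (Fin k → V) × (Fin k → V) // ∀ j, G.Adj (p.1 j) (p.2 j)}
      ≃ {f : Fin k → V × V // ∀ j, G.Adj (f j).1 (f j).2} := by
    refine Equiv.subtypeEquiv (Equiv.arrowProdEquivProdArrow (Fin k) (fun _ => V) (fun _ => V)).symm ?_
    intro p
    simp [Equiv.arrowProdEquivProdArrow]
  have e2 : {f : Fin k → V × V // ∀ j, G.Adj (f j).1 (f j).2}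
      ≃ ∀ _j : Fin k, {q : V × V // G.Adj q.1 q.2} :=
    Equiv.subtypePiEquivPi (β := fun _ : Fin k => V × V) (p := fun _ q => G.Adj q.1 q.2)
  have e3 : {q : V × V // G.Adj q.1 q.2} ≃ G.Dart :=
    ⟨fun q => ⟨q.1, q.2⟩, fun d => ⟨d.toProd, d.adj⟩, fun q => rfl, fun d => rfl⟩
  rw [Fintype.card_congr (e1.trans (e2.trans (Equiv.piCongrRight fun _ => e3)))]
  rw [Fintype.card_pi]
  simp [dart_card_eq_twice_card_edges]

noncomputable def Lad (G : SimpleGraph V) (k ℓ : ℕ) (α : ℝ) (s : ℕ → ℝ) :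
    Finset ((Fin ℓ → Fin k → V) × (Fin ℓ → Fin k → V)) :=
  univ.filter fun p => IsGoodLadder G k ℓ α s p.1 p.2

lemma lad_congr (G : SimpleGraph V) (k ℓ : ℕ) (α : ℝ) (s s' : ℕ → ℝ)
    (hss : ∀ i, i + 1 < ℓ → s i = s' i) : Lad G k ℓ α s = Lad G k ℓ α s' := by
  have key : ∀ (s s' : ℕ → ℝ), (∀ i, i + 1 < ℓ → s i = s' i) →
      ∀ x y : Fin ℓ → Fin k → V, IsGoodLadder G k ℓ α s x y → IsGoodLadder G k ℓ α s' x y := by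
    rintro s s' hss x y ⟨h1, h2, h3⟩
    exact ⟨h1, fun i hi => ⟨(hss i.1 hi) ▸ (h2 i hi).1, (h2 i hi).2⟩, h3⟩
  unfold Lad
  ext p
  simp only [mem_filter, mem_univ, true_and]
  exact ⟨key s s' hss p.1 p.2, key s' s (fun i hi => (hss i hi).symm) p.1 p.2⟩

lemma good_one_iff {k : ℕ} (hk : 0 < k) (G : SimpleGraph V) (α : ℝ) (s : ℕ → ℝ)
    (x y : Fin 1 → Fin k → V) :
    IsGoodLadder G k 1 α s x y ↔ ∀ j, G.Adj (x 0 j) (y 0 j) := by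
  constructor
  · rintro ⟨⟨h1, -⟩, -, -⟩
    exact ((tpAdj G _ _).mp (h1 0)).2
  · intro h
    have hadj : (tensorPow G k).Adj (x 0) (y 0) :=
      (tpAdj G _ _).mpr ⟨fun he => (h ⟨0, hk⟩).ne (congrFun he _), h⟩
    refine ⟨⟨fun i => by rw [Subsingleton.elim i 0]; exact hadj,
      fun i hi => absurd hi (by omega)⟩, fun i hi => absurd hi (by omega), fun j => ?_⟩
    rintro ⟨i, b⟩ ⟨i', b'⟩ hh
    rw [Subsingleton.elim i 0, Subsingleton.elim i' 0]
    rw [Subsingleton.elim i 0, Subsingleton.elim i' 0] at hh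
    cases b <;> cases b' <;> simp_all
    · exact (h j).ne' hh
    · exact (h j).ne hh

/-! ### candidate sets for the extension step -/

noncomputable def usedF {k ℓ : ℕ} (p : (Fin ℓ → Fin k → V) × (Fin ℓ → Fin k → V)) (j : Fin k) :
    Finset V :=
  image (fun q : Fin ℓ × Bool => if q.2 then p.1 q.1 j else p.2 q.1 j) univ

noncomputable def Cc (G : SimpleGraph V) (α : ℝ) {k m : ℕ}
    (p : (Fin (m + 1) → Fin k → V) × (Fin (m + 1) → Fin k → V)) (j : Fin k) : Finset V :=
  (univ.filter fun w =>
      G.Adj (p.1 (Fin.last m) j) w ∧ α ≤ (codeg G (p.2 (Fin.last m) j) w : ℝ)) \ usedF p j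

noncomputable def CCs (G : SimpleGraph V) (α : ℝ) {k m : ℕ}
    (p : (Fin (m + 1) → Fin k → V) × (Fin (m + 1) → Fin k → V)) : Finset (Fin k → V) :=
  Fintype.piFinset (Cc G α p)

noncomputable def Dc (G : SimpleGraph V) {k m : ℕ}
    (p : (Fin (m + 1) → Fin k → V) × (Fin (m + 1) → Fin k → V)) (a : Fin k → V) (j : Fin k) :
    Finset V :=
  ((G.neighborFinset (a j)) ∩ (G.neighborFinset (p.2 (Fin.last m) j)))
    \ insert (a j) (usedF p j)

noncomputable def DDs (G : SimpleGraph V) {k m : ℕ}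
    (p : (Fin (m + 1) → Fin k → V) × (Fin (m + 1) → Fin k → V)) (a : Fin k → V) :
    Finset (Fin k → V) :=
  Fintype.piFinset (Dc G p a)

lemma snoc_lt {n : ℕ} {β : Sort*} (p : Fin n → β) (z : β) (m : ℕ) (hm : m < n)
    (hm' : m < n + 1) : (Fin.snoc p z : Fin (n + 1) → β) ⟨m, hm'⟩ = p ⟨m, hm⟩ := by
  have : (⟨m, hm'⟩ : Fin (n + 1)) = Fin.castSucc ⟨m, hm⟩ := rfl
  rw [this, Fin.snoc_castSucc]

lemma snoc_eq_of_lt {n : ℕ} {β : Sort*} (p : Fin n → β) (z : β) (i : Fin (n + 1))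
    (hi : (i : ℕ) < n) : (Fin.snoc p z : Fin (n + 1) → β) i = p ⟨(i : ℕ), hi⟩ := by
  conv_lhs => rw [← Fin.eta i i.isLt]
  exact snoc_lt p z _ hi _

lemma snoc_eq_last {n : ℕ} {β : Sort*} (p : Fin n → β) (z : β) (i : Fin (n + 1))
    (hi : (i : ℕ) = n) : (Fin.snoc p z : Fin (n + 1) → β) i = z := by
  have : i = Fin.last n := Fin.ext (by simpa using hi)
  rw [this, Fin.snoc_last]

lemma good_ext (G : SimpleGraph V) {k m : ℕ} (hk : 0 < k) (α : ℝ) (s : ℕ → ℝ) (σ : ℝ)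
    (x y : Fin (m + 1) → Fin k → V) (hgood : IsGoodLadder G k (m + 1) α s x y)
    (a b : Fin k → V) (ha : a ∈ CCs G α (x, y)) (hb : b ∈ DDs G (x, y) a)
    (hcod : (codeg (tensorPow G k) a (y (Fin.last m)) : ℝ) ≤ σ) :
    IsGoodLadder G k (m + 2) α (Function.update s m σ) (Fin.snoc x a) (Fin.snoc y b) := by
  obtain ⟨⟨l1, l2⟩, cod, inj⟩ := hgood
  have fa : ∀ j, G.Adj (x (Fin.last m) j) (a j) ∧ α ≤ (codeg G (y (Fin.last m) j) (a j) : ℝ)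
      ∧ a j ∉ usedF (x, y) j := by
    intro j
    have hj := (Fintype.mem_piFinset.mp ha) j
    simp only [Cc, mem_sdiff, mem_filter, mem_univ, true_and] at hj
    exact ⟨hj.1.1, hj.1.2, hj.2⟩
  have fb : ∀ j, G.Adj (a j) (b j) ∧ G.Adj (y (Fin.last m) j) (b j)
      ∧ b j ≠ a j ∧ b j ∉ usedF (x, y) j := by
    intro j
    have hj := (Fintype.mem_piFinset.mp hb) j
    simp only [Dc, mem_sdiff, Finset.mem_inter, mem_neighborFinset, mem_insert, not_or] at hj
    exact ⟨hj.1.1, hj.1.2, hj.2.1, hj.2.2⟩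
  refine ⟨⟨?_, ?_⟩, ?_, ?_⟩
  · -- rungs
    intro i
    by_cases hi : (i : ℕ) < m + 1
    · rw [snoc_eq_of_lt x a i hi, snoc_eq_of_lt y b i hi]
      exact l1 _
    · rw [snoc_eq_last x a i (by omega), snoc_eq_last y b i (by omega)]
      exact (tpAdj G _ _).mpr ⟨fun he => (fb ⟨0, hk⟩).2.2.1 (congrFun he.symm _), fun j => (fb j).1⟩
  · -- rails
    intro i h
    have hi : (i : ℕ) < m + 1 := by omega
    by_cases h2 : (i : ℕ) + 1 < m + 1
    · rw [snoc_eq_of_lt x a i hi, snoc_eq_of_lt y b i hi,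
        snoc_eq_of_lt x a ⟨(i : ℕ) + 1, h⟩ h2, snoc_eq_of_lt y b ⟨(i : ℕ) + 1, h⟩ h2]
      exact l2 ⟨(i : ℕ), hi⟩ h2
    · have hieq : (i : ℕ) = m := by omega
      have hlast : (⟨(i : ℕ), hi⟩ : Fin (m + 1)) = Fin.last m := Fin.ext (by simpa using hieq)
      rw [snoc_eq_of_lt x a i hi, snoc_eq_of_lt y b i hi,
        snoc_eq_last x a ⟨(i : ℕ) + 1, h⟩ (by simpa using hieq),
        snoc_eq_last y b ⟨(i : ℕ) + 1, h⟩ (by simpa using hieq), hlast]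
      exact ⟨(tpAdj G _ _).mpr ⟨fun he => (fa ⟨0, hk⟩).1.ne (congrFun he _), fun j => (fa j).1⟩,
        (tpAdj G _ _).mpr ⟨fun he => (fb ⟨0, hk⟩).2.1.ne (congrFun he _), fun j => (fb j).2.1⟩⟩
  · -- codegree conditions
    intro i h
    have hi : (i : ℕ) < m + 1 := by omega
    by_cases h2 : (i : ℕ) + 1 < m + 1
    · rw [snoc_eq_of_lt x a ⟨(i : ℕ) + 1, h⟩ h2, snoc_eq_of_lt y b i hi]
      have hcond := cod ⟨(i : ℕ), hi⟩ h2
      refine ⟨?_, hcond.2⟩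
      rw [Function.update_of_ne (by omega : (i : ℕ) ≠ m)]
      exact hcond.1
    · have hieq : (i : ℕ) = m := by omega
      have hlast : (⟨(i : ℕ), hi⟩ : Fin (m + 1)) = Fin.last m := Fin.ext (by simpa using hieq)
      rw [snoc_eq_last x a ⟨(i : ℕ) + 1, h⟩ (by simpa using hieq),
        snoc_eq_of_lt y b i hi, hlast, hieq, Function.update_self]
      exact ⟨hcod, fun j => by rw [codeg_comm]; exact (fa j).2.1⟩
  · -- injectivity in each coordinate
    intro j
    have oinj := inj j
    rintro ⟨i, c⟩ ⟨i', c'⟩ hh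
    simp only at hh
    by_cases hi : (i : ℕ) < m + 1 <;> by_cases hi' : (i' : ℕ) < m + 1
    · rw [snoc_eq_of_lt x a i hi, snoc_eq_of_lt y b i hi, snoc_eq_of_lt x a i' hi',
        snoc_eq_of_lt y b i' hi'] at hh
      have := oinj (show (fun q : Fin (m+1) × Bool => if q.2 then x q.1 j else y q.1 j)
        (⟨(i : ℕ), hi⟩, c) = (fun q : Fin (m+1) × Bool => if q.2 then x q.1 j else y q.1 j)
        (⟨(i' : ℕ), hi'⟩, c') from hh)
      have h1 : (i : ℕ) = (i' : ℕ) := congrArg (fun q => ((q.1 : Fin (m+1)) : ℕ)) this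
      have h2 : c = c' := congrArg Prod.snd this
      exact Prod.ext (Fin.ext h1) h2
    · exfalso
      rw [snoc_eq_of_lt x a i hi, snoc_eq_of_lt y b i hi, snoc_eq_last x a i' (by omega),
        snoc_eq_last y b i' (by omega)] at hh
      have hmem : (if c then x ⟨(i : ℕ), hi⟩ j else y ⟨(i : ℕ), hi⟩ j) ∈ usedF (x, y) j := by
        simp only [usedF, mem_image]
        exact ⟨(⟨(i : ℕ), hi⟩, c), mem_univ _, rfl⟩
      cases c' with
      | true =>
        simp only [if_true] at hh
        rw [hh] at hmem
        exact (fa j).2.2 hmem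
      | false =>
        simp only [Bool.false_eq_true, if_false] at hh
        rw [hh] at hmem
        exact (fb j).2.2.2 hmem
    · exfalso
      rw [snoc_eq_of_lt x a i' hi', snoc_eq_of_lt y b i' hi', snoc_eq_last x a i (by omega),
        snoc_eq_last y b i (by omega)] at hh
      have hmem : (if c' then x ⟨(i' : ℕ), hi'⟩ j else y ⟨(i' : ℕ), hi'⟩ j) ∈ usedF (x, y) j := by
        simp only [usedF, mem_image]
        exact ⟨(⟨(i' : ℕ), hi'⟩, c'), mem_univ _, rfl⟩
      cases c with
      | true =>
        simp only [if_true] at hh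
        rw [← hh] at hmem
        exact (fa j).2.2 hmem
      | false =>
        simp only [Bool.false_eq_true, if_false] at hh
        rw [← hh] at hmem
        exact (fb j).2.2.2 hmem
    · have hii : i = i' := Fin.ext (by have := i.isLt; have := i'.isLt; omega)
      subst hii
      rw [snoc_eq_last x a i (by omega), snoc_eq_last y b i (by omega)] at hh
      cases c <;> cases c' <;> simp only [if_true, Bool.false_eq_true, if_false] at hh
      · rfl
      · exact absurd hh (fb j).2.2.1
      · exact absurd hh.symm (fb j).2.2.1
      · rfl


lemma usedF_card {k ℓ : ℕ} (p : (Fin ℓ → Fin k → V) × (Fin ℓ → Fin k → V)) (j : Fin k) :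
    (usedF p j).card ≤ 2 * ℓ := by
  refine le_trans card_image_le ?_
  simp only [card_univ, Fintype.card_prod, Fintype.card_fin, Fintype.card_bool]
  omega

lemma Cc_card (G : SimpleGraph V) {k m : ℕ} (n : ℕ) (α : ℝ)
    (hexp : ∀ u v : V, G.Adj u v → α * (n : ℝ) ^ ((1 : ℝ) / 2) ≤
      (({w : V | G.Adj u w ∧ α ≤ (codeg G v w : ℝ)}).ncard : ℝ))
    (s : ℕ → ℝ) (p : (Fin (m + 1) → Fin k → V) × (Fin (m + 1) → Fin k → V))
    (hp : p ∈ Lad G k (m + 1) α s) (j : Fin k) :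
    α * (n : ℝ) ^ ((1 : ℝ) / 2) - 2 * (m + 1) ≤ ((Cc G α p j).card : ℝ) := by
  have hgood := (mem_filter.mp hp).2
  have hadj : G.Adj (p.1 (Fin.last m) j) (p.2 (Fin.last m) j) := ((tpAdj G _ _).mp (hgood.1.1 (Fin.last m))).2 j
  set Q : Finset V := univ.filter
    (fun w => G.Adj (p.1 (Fin.last m) j) w ∧ α ≤ (codeg G (p.2 (Fin.last m) j) w : ℝ)) with hQ
  have hQ2 : ({w : V | G.Adj (p.1 (Fin.last m) j) w
      ∧ α ≤ (codeg G (p.2 (Fin.last m) j) w : ℝ)} : Set V).ncard = Q.card := by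
    rw [hQ, Set.ncard_eq_toFinset_card', Set.toFinset_setOf]
  have h1 : α * (n : ℝ) ^ ((1 : ℝ) / 2) ≤ (Q.card : ℝ) := by
    rw [← hQ2]
    exact hexp _ _ hadj
  have h2 : ((usedF p j).card : ℝ) ≤ 2 * ((m : ℝ) + 1) := by
    have := usedF_card p j
    push_cast
    exact_mod_cast this
  have h3 : (Q.card : ℝ) ≤ ((Q \ usedF p j).card : ℝ) + ((usedF p j).card : ℝ) := by
    exact_mod_cast Finset.card_le_card_sdiff_add_card (s := Q) (t := usedF p j)
  have hCc : Cc G α p j = Q \ usedF p j := rfl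
  rw [hCc]
  push_cast
  linarith

lemma Dc_card (G : SimpleGraph V) {k m : ℕ} (α : ℝ) (hα4 : 4 * (m : ℝ) + 8 ≤ α)
    (p : (Fin (m + 1) → Fin k → V) × (Fin (m + 1) → Fin k → V)) (a : Fin k → V)
    (hca : ∀ j, α ≤ (codeg G (p.2 (Fin.last m) j) (a j) : ℝ)) (j : Fin k) :
    (codeg G (a j) (p.2 (Fin.last m) j) : ℝ) / 2 ≤ ((Dc G p a j).card : ℝ) := by
  have hc : α ≤ (codeg G (a j) (p.2 (Fin.last m) j) : ℝ) := by
    rw [codeg_comm]; exact hca j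
  set Q : Finset V := (G.neighborFinset (a j)) ∩ (G.neighborFinset (p.2 (Fin.last m) j)) with hQ
  set U : Finset V := insert (a j) (usedF p j) with hU
  have h2 : (U.card : ℝ) ≤ 2 * ((m : ℝ) + 1) + 1 := by
    have hi := Finset.card_insert_le (a j) (usedF p j)
    have hu := usedF_card p j
    have : U.card ≤ 2 * (m + 1) + 1 := le_trans hi (by omega)
    push_cast
    exact_mod_cast this
  have h3 : (Q.card : ℝ) ≤ ((Q \ U).card : ℝ) + (U.card : ℝ) := by
    exact_mod_cast Finset.card_le_card_sdiff_add_card (s := Q) (t := U)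
  have h4 : (Q.card : ℝ) = (codeg G (a j) (p.2 (Fin.last m) j) : ℝ) := by
    rw [hQ, ← codeg_eq_card]
  have hDc : Dc G p a j = Q \ U := rfl
  rw [hDc]
  linarith

set_option maxHeartbeats 2000000 in
lemma extension (G : SimpleGraph V) (t k n : ℕ) (α : ℝ)
    (ht : 2 ≤ t) (hα : 4 * (t : ℝ) ≤ α) (hk : 0 < k) (hn : 2 ≤ n)
    (hcard : Fintype.card V = n)
    (hexp : ∀ u v : V, G.Adj u v → α * (n : ℝ) ^ ((1 : ℝ) / 2) ≤
      (({w : V | G.Adj u w ∧ α ≤ (codeg G v w : ℝ)}).ncard : ℝ))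
    (ℓ : ℕ) (hℓ1 : 1 ≤ ℓ) (hℓt : ℓ < t) (s : ℕ → ℝ) :
    ∃ σ : ℝ, 1 ≤ σ ∧
      ((Lad G k ℓ α s).card : ℝ) *
          ((α * (n : ℝ) ^ ((1 : ℝ) / 2)) ^ k * σ / (4 ^ (k + 1) * Real.logb 2 ((n : ℝ) ^ k)))
        ≤ ((Lad G k (ℓ + 1) α (Function.update s (ℓ - 1) σ)).card : ℝ) := by
  obtain ⟨m, rfl⟩ : ∃ m, ℓ = m + 1 := ⟨ℓ - 1, by omega⟩
  simp only [Nat.add_sub_cancel]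
  set A : ℝ := α * (n : ℝ) ^ ((1 : ℝ) / 2) with hA
  set Lg : ℝ := Real.logb 2 ((n : ℝ) ^ k) with hLgdef
  set M : ℕ := Nat.log 2 (n ^ k) + 1 with hM
  set L := Lad G k (m + 1) α s with hL
  have ht' : (2 : ℝ) ≤ (t : ℝ) := by exact_mod_cast ht
  have hα8 : (8 : ℝ) ≤ α := by linarith
  have hn2 : (2 : ℝ) ≤ (n : ℝ) := by exact_mod_cast hn
  have hrt : (1 : ℝ) ≤ (n : ℝ) ^ ((1 : ℝ) / 2) := Real.one_le_rpow (by linarith) (by norm_num)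
  have hαA : α ≤ A := by
    rw [hA]; nlinarith
  have hmt : (m : ℝ) + 2 ≤ (t : ℝ) := by exact_mod_cast hℓt
  have hA4 : 4 * (m : ℝ) + 8 ≤ α := by linarith
  have hA0 : (0 : ℝ) < A := by linarith
  have hAm : A / 2 ≤ A - 2 * ((m : ℝ) + 1) := by linarith
  have h2nk : (2 : ℝ) ≤ (n : ℝ) ^ k := by
    calc (2 : ℝ) ≤ (n : ℝ) := hn2
    _ ≤ (n : ℝ) ^ k := le_self_pow₀ (by linarith) (by omega)
  have hLg1 : (1 : ℝ) ≤ Lg := by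
    rw [hLgdef]
    calc (1 : ℝ) = Real.logb 2 2 := (Real.logb_self_eq_one (by norm_num)).symm
    _ ≤ Real.logb 2 ((n : ℝ) ^ k) :=
      Real.logb_le_logb_of_le (by norm_num) (by norm_num) h2nk
  have hM2 : (M : ℝ) ≤ 2 * Lg := by
    have h1 := Real.natLog_le_logb (n ^ k) 2
    rw [hM]
    push_cast at h1 ⊢
    rw [hLgdef]
    linarith
  have hM0 : 0 < M := by omega
  have hM0' : (0 : ℝ) < (M : ℝ) := by exact_mod_cast hM0
  -- lower bound on candidate sets
  have hCC : ∀ p ∈ L, ((A / 2) ^ k : ℝ) ≤ ((CCs G α p).card : ℝ) := by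
    intro p hp
    have hcard' : (CCs G α p).card = ∏ j, (Cc G α p j).card := Fintype.card_piFinset _
    rw [hcard']
    push_cast
    calc (A / 2) ^ k = ∏ _j : Fin k, (A / 2) := by
          rw [Finset.prod_const, card_univ, Fintype.card_fin]
    _ ≤ ∏ j, ((Cc G α p j).card : ℝ) :=
      Finset.prod_le_prod (fun _ _ => by linarith) (fun j _ =>
        le_trans hAm (Cc_card G n α hexp s p hp j))
  -- all candidates fall in buckets below M
  have hbux : ∀ p ∈ L, ∀ a ∈ CCs G α p,
      Nat.log 2 (codeg (tensorPow G k) a (p.2 (Fin.last m))) < M := by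
    intro p hp a ha
    have h1 : codeg (tensorPow G k) a (p.2 (Fin.last m)) ≤ n ^ k := by
      have h2 := codeg_le_card (tensorPow G k) a (p.2 (Fin.last m))
      rwa [Fintype.card_pi, Finset.prod_const, card_univ, Fintype.card_fin, hcard] at h2
    have := Nat.log_mono_right (b := 2) h1
    omega
  set bucket : ((Fin (m + 1) → Fin k → V) × (Fin (m + 1) → Fin k → V)) → ℕ →
      Finset (Fin k → V) := fun p j0 =>
    (CCs G α p).filter
      (fun a => Nat.log 2 (codeg (tensorPow G k) a (p.2 (Fin.last m))) = j0) with hbk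
  have hsplit : ∀ p ∈ L, (CCs G α p).card = ∑ j0 ∈ range M, (bucket p j0).card := by
    intro p hp
    exact Finset.card_eq_sum_card_fiberwise (fun a ha => mem_range.mpr (hbux p hp a ha))
  set B : ℕ → ℕ := fun j0 => ∑ p ∈ L, (bucket p j0).card with hB
  have hT : ∑ p ∈ L, (CCs G α p).card = ∑ j0 ∈ range M, B j0 := by
    rw [Finset.sum_congr rfl hsplit]
    exact Finset.sum_comm
  obtain ⟨j0, hj0m, hj0max⟩ := Finset.exists_max_image (range M) B ⟨0, mem_range.mpr hM0⟩
  have hTM : ∑ p ∈ L, (CCs G α p).card ≤ M * B j0 := by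
    rw [hT]
    calc ∑ j' ∈ range M, B j' ≤ ∑ _j' ∈ range M, B j0 :=
          Finset.sum_le_sum (fun j hj => hj0max j hj)
    _ = M * B j0 := by rw [Finset.sum_const, card_range, smul_eq_mul]
  have hσ1 : (1 : ℝ) ≤ (2 : ℝ) ^ (j0 + 1) := one_le_pow₀ (by norm_num)
  refine ⟨(2 : ℝ) ^ (j0 + 1), hσ1, ?_⟩
  set s' := Function.update s m ((2 : ℝ) ^ (j0 + 1)) with hs'
  -- lower bound for the extension sets
  have hDD : ∀ p ∈ L, ∀ a ∈ bucket p j0,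
      (2 : ℝ) ^ (j0 + 1) / 2 ^ (k + 1) ≤ ((DDs G p a).card : ℝ) := by
    intro p hp a ha'
    obtain ⟨haC, haj⟩ := mem_filter.mp ha'
    have hca : ∀ j, α ≤ (codeg G (p.2 (Fin.last m) j) (a j) : ℝ) := by
      intro j
      have hj := (Fintype.mem_piFinset.mp haC) j
      simp only [Cc, mem_sdiff, mem_filter, mem_univ, true_and] at hj
      exact hj.1.2
    have hDDcard : (DDs G p a).card = ∏ j, (Dc G p a j).card := Fintype.card_piFinset _
    have hprod : codeg (tensorPow G k) a (p.2 (Fin.last m))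
        = ∏ j, codeg G (a j) (p.2 (Fin.last m) j) := codeg_tensorPow hk G a _
    have hc1 : ∀ j, 1 ≤ codeg G (a j) (p.2 (Fin.last m) j) := by
      intro j
      have h1 : (1 : ℝ) ≤ (codeg G (a j) (p.2 (Fin.last m) j) : ℝ) := by
        rw [codeg_comm]
        linarith [hca j]
      exact_mod_cast h1
    have hcne : codeg (tensorPow G k) a (p.2 (Fin.last m)) ≠ 0 := by
      rw [hprod]
      have hpos : 0 < ∏ j, codeg G (a j) (p.2 (Fin.last m) j) :=
        Finset.prod_pos (fun j _ => Nat.lt_of_lt_of_le Nat.zero_lt_one (hc1 j))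
      omega
    have hlow : (2 : ℕ) ^ j0 ≤ codeg (tensorPow G k) a (p.2 (Fin.last m)) := by
      have h1 := Nat.pow_log_le_self 2 hcne
      rwa [haj] at h1
    rw [hDDcard]
    push_cast
    calc (2 : ℝ) ^ (j0 + 1) / 2 ^ (k + 1) = (2 : ℝ) ^ j0 / 2 ^ k := by
          rw [pow_succ, pow_succ]
          field_simp
    _ ≤ (codeg (tensorPow G k) a (p.2 (Fin.last m)) : ℝ) / 2 ^ k := by
          have h2 : ((2 : ℕ) ^ j0 : ℝ) ≤ (codeg (tensorPow G k) a (p.2 (Fin.last m)) : ℝ) := by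
            exact_mod_cast hlow
          push_cast at h2
          gcongr
    _ = ∏ j, ((codeg G (a j) (p.2 (Fin.last m) j) : ℝ) / 2) := by
          rw [hprod]
          push_cast
          rw [Finset.prod_div_distrib, Finset.prod_const, card_univ, Fintype.card_fin]
    _ ≤ ∏ j, ((Dc G p a j).card : ℝ) :=
          Finset.prod_le_prod (fun j _ => by positivity) (fun j _ => Dc_card G α hA4 p a hca j)
  -- injection into the longer ladders
  have hcount : (∑ p ∈ L, ∑ a ∈ bucket p j0, (DDs G p a).card)
      ≤ (Lad G k (m + 1 + 1) α s').card := by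
    classical
    set S := L.sigma (fun p => (bucket p j0).sigma (fun a => DDs G p a)) with hS
    have hcardS : S.card = ∑ p ∈ L, ∑ a ∈ bucket p j0, (DDs G p a).card := by
      rw [hS, Finset.card_sigma]
      exact Finset.sum_congr rfl (fun p _ => Finset.card_sigma _ _)
    rw [← hcardS]
    refine Finset.card_le_card_of_injOn
      (fun z => (Fin.snoc z.1.1 z.2.1, Fin.snoc z.1.2 z.2.2)) ?_ ?_
    · intro z hz
      rw [hS, Finset.mem_coe, Finset.mem_sigma] at hz
      obtain ⟨hz1, hz2⟩ := hz
      rw [Finset.mem_sigma] at hz2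
      obtain ⟨hz2a, hz2b⟩ := hz2
      obtain ⟨haC, haj⟩ := mem_filter.mp hz2a
      have hgood := (mem_filter.mp hz1).2
      have hcod : (codeg (tensorPow G k) z.2.1 (z.1.2 (Fin.last m)) : ℝ)
          ≤ (2 : ℝ) ^ (j0 + 1) := by
        have h1 := Nat.lt_pow_succ_log_self (by norm_num : 1 < 2)
          (codeg (tensorPow G k) z.2.1 (z.1.2 (Fin.last m)))
        rw [haj] at h1
        have h2 := h1.le
        exact_mod_cast h2
      refine Finset.mem_coe.mpr (mem_filter.mpr ⟨mem_univ _, ?_⟩)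
      exact good_ext G hk α s _ z.1.1 z.1.2 hgood z.2.1 z.2.2 haC hz2b hcod
    · rintro ⟨⟨x, y⟩, a, b⟩ h1 ⟨⟨x', y'⟩, a', b'⟩ h2 h
      simp only [Prod.mk.injEq] at h
      obtain ⟨hxx, hyy⟩ := h
      have ex : x = x' := by
        have h3 := congrArg Fin.init hxx
        rwa [Fin.init_snoc, Fin.init_snoc] at h3
      have ea : a = a' := by
        have h3 := congrArg (fun w => w (Fin.last (m + 1))) hxx
        simpa only [Fin.snoc_last] using h3
      have ey : y = y' := by
        have h3 := congrArg Fin.init hyy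
        rwa [Fin.init_snoc, Fin.init_snoc] at h3
      have eb : b = b' := by
        have h3 := congrArg (fun w => w (Fin.last (m + 1))) hyy
        simpa only [Fin.snoc_last] using h3
      subst ex; subst ea; subst ey; subst eb
      rfl
  -- assemble the chain of inequalities
  have I1 : (L.card : ℝ) * (A / 2) ^ k ≤ ((∑ p ∈ L, (CCs G α p).card : ℕ) : ℝ) := by
    push_cast
    calc (L.card : ℝ) * (A / 2) ^ k = ∑ _p ∈ L, (A / 2) ^ k := by
          rw [Finset.sum_const, nsmul_eq_mul]
    _ ≤ ∑ p ∈ L, ((CCs G α p).card : ℝ) := Finset.sum_le_sum hCC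
  have I2 : ((∑ p ∈ L, (CCs G α p).card : ℕ) : ℝ) ≤ (M : ℝ) * (B j0 : ℝ) := by
    exact_mod_cast hTM
  have I3 : (B j0 : ℝ) * ((2 : ℝ) ^ (j0 + 1) / 2 ^ (k + 1))
      ≤ ((Lad G k (m + 1 + 1) α s').card : ℝ) := by
    have h1 : (B j0 : ℝ) * ((2 : ℝ) ^ (j0 + 1) / 2 ^ (k + 1))
        = ∑ p ∈ L, ((bucket p j0).card : ℝ) * ((2 : ℝ) ^ (j0 + 1) / 2 ^ (k + 1)) := by
      rw [hB]
      push_cast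
      rw [Finset.sum_mul]
    rw [h1]
    calc ∑ p ∈ L, ((bucket p j0).card : ℝ) * ((2 : ℝ) ^ (j0 + 1) / 2 ^ (k + 1))
        = ∑ p ∈ L, ∑ _a ∈ bucket p j0, ((2 : ℝ) ^ (j0 + 1) / 2 ^ (k + 1)) := by
          refine Finset.sum_congr rfl fun p _ => ?_
          rw [Finset.sum_const, nsmul_eq_mul]
    _ ≤ ∑ p ∈ L, ∑ a ∈ bucket p j0, ((DDs G p a).card : ℝ) :=
          Finset.sum_le_sum (fun p hp => Finset.sum_le_sum (fun a ha => hDD p hp a ha))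
    _ = ((∑ p ∈ L, ∑ a ∈ bucket p j0, (DDs G p a).card : ℕ) : ℝ) := by push_cast; rfl
    _ ≤ ((Lad G k (m + 1 + 1) α s').card : ℝ) := by exact_mod_cast hcount
  have hden1 : (0 : ℝ) < 2 ^ k * (M : ℝ) * 2 ^ (k + 1) := by positivity
  have hdenle : 2 ^ k * (M : ℝ) * 2 ^ (k + 1) ≤ 4 ^ (k + 1) * Lg := by
    have h4 : (4 : ℝ) ^ (k + 1) = 2 ^ (k + 1) * 2 ^ (k + 1) := by
      rw [← mul_pow]; norm_num
    calc 2 ^ k * (M : ℝ) * 2 ^ (k + 1) ≤ 2 ^ k * (2 * Lg) * 2 ^ (k + 1) := by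
          have hp1 : (0 : ℝ) < 2 ^ k := by positivity
          have hp2 : (0 : ℝ) < 2 ^ (k + 1) := by positivity
          nlinarith
    _ = 4 ^ (k + 1) * Lg := by rw [h4, pow_succ]; ring
  have hnum0 : (0 : ℝ) ≤ (L.card : ℝ) * A ^ k * (2 : ℝ) ^ (j0 + 1) := by positivity
  calc (L.card : ℝ) * (A ^ k * (2 : ℝ) ^ (j0 + 1) / (4 ^ (k + 1) * Lg))
      = ((L.card : ℝ) * A ^ k * (2 : ℝ) ^ (j0 + 1)) / (4 ^ (k + 1) * Lg) := by ring
  _ ≤ ((L.card : ℝ) * A ^ k * (2 : ℝ) ^ (j0 + 1)) / (2 ^ k * (M : ℝ) * 2 ^ (k + 1)) :=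
      div_le_div_of_nonneg_left hnum0 hden1 hdenle
  _ = (L.card : ℝ) * (A / 2) ^ k * ((2 : ℝ) ^ (j0 + 1) / 2 ^ (k + 1)) / (M : ℝ) := by
      rw [div_pow]
      ring
  _ ≤ ((∑ p ∈ L, (CCs G α p).card : ℕ) : ℝ) * ((2 : ℝ) ^ (j0 + 1) / 2 ^ (k + 1)) / (M : ℝ) := by
      gcongr
  _ ≤ ((M : ℝ) * (B j0 : ℝ)) * ((2 : ℝ) ^ (j0 + 1) / 2 ^ (k + 1)) / (M : ℝ) := by
      gcongr
  _ = (B j0 : ℝ) * ((2 : ℝ) ^ (j0 + 1) / 2 ^ (k + 1)) := by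
      field_simp
  _ ≤ ((Lad G k (m + 1 + 1) α s').card : ℝ) := I3

lemma lad_one_card {k : ℕ} (hk : 0 < k) (G : SimpleGraph V) (α : ℝ) (s : ℕ → ℝ) :
    (Lad G k 1 α s).card = (2 * G.edgeFinset.card) ^ k := by
  rw [Lad, ← Fintype.card_subtype, ← card_pairs (k := k) G, ← Fintype.card_subtype]
  apply Fintype.card_congr
  refine Equiv.trans (Equiv.subtypeEquivRight (fun p => good_one_iff hk G α s p.1 p.2)) ?_
  exact Equiv.subtypeEquiv
    (Equiv.prodCongr (Equiv.funUnique (Fin 1) (Fin k → V)) (Equiv.funUnique (Fin 1) (Fin k → V)))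
    (fun p => Iff.rfl)

lemma edge_ncard (G : SimpleGraph V) : G.edgeSet.ncard = G.edgeFinset.card := by
  rw [Set.ncard_eq_toFinset_card']
  congr 1

lemma key (G : SimpleGraph V) (t k n : ℕ) (α : ℝ)
    (ht : 2 ≤ t) (hα : 4 * (t : ℝ) ≤ α) (hk : 0 < k) (hn : 2 ≤ n)
    (hcard : Fintype.card V = n)
    (hedge : α * (n : ℝ) ^ ((3 : ℝ) / 2) ≤ (G.edgeSet.ncard : ℝ))
    (hexp : ∀ u v : V, G.Adj u v → α * (n : ℝ) ^ ((1 : ℝ) / 2) ≤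
      (({w : V | G.Adj u w ∧ α ≤ (codeg G v w : ℝ)}).ncard : ℝ)) :
    ∀ ℓ, 1 ≤ ℓ → ℓ ≤ t → ∃ s : ℕ → ℝ, (∀ i, 1 ≤ s i) ∧
      α ^ (ℓ * k) * (n : ℝ) ^ (((ℓ : ℝ) / 2 + 1) * k) * (∏ i ∈ range (ℓ - 1), s i) /
          (4 ^ (k + 1) * Real.logb 2 ((n : ℝ) ^ k)) ^ (ℓ - 1)
        ≤ ((Lad G k ℓ α s).card : ℝ) := by
  have ht' : (2 : ℝ) ≤ (t : ℝ) := by exact_mod_cast ht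
  have hα8 : (8 : ℝ) ≤ α := by linarith
  have hn2 : (2 : ℝ) ≤ (n : ℝ) := by exact_mod_cast hn
  have hnpos : (0 : ℝ) < (n : ℝ) := by linarith
  have h2nk : (2 : ℝ) ≤ (n : ℝ) ^ k := by
    calc (2 : ℝ) ≤ (n : ℝ) := hn2
    _ ≤ (n : ℝ) ^ k := le_self_pow₀ (by linarith) (by omega)
  have hLg1 : (1 : ℝ) ≤ Real.logb 2 ((n : ℝ) ^ k) := by
    calc (1 : ℝ) = Real.logb 2 2 := (Real.logb_self_eq_one (by norm_num)).symm
    _ ≤ Real.logb 2 ((n : ℝ) ^ k) :=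
      Real.logb_le_logb_of_le (by norm_num) (by norm_num) h2nk
  have hD0 : (0 : ℝ) < 4 ^ (k + 1) * Real.logb 2 ((n : ℝ) ^ k) := by
    have : (0 : ℝ) < 4 ^ (k + 1) := by positivity
    nlinarith
  intro ℓ hℓ1
  induction ℓ, hℓ1 using Nat.le_induction with
  | base =>
    intro _
    refine ⟨fun _ => 1, fun _ => le_refl 1, ?_⟩
    simp only [Nat.sub_self, range_zero, prod_empty, pow_zero, mul_one, div_one]
    rw [lad_one_card hk G α _]
    push_cast
    simp only [one_mul]
    have e2 : (n : ℝ) ^ (((1 : ℝ) / 2 + 1) * (k : ℝ)) = ((n : ℝ) ^ ((3 : ℝ) / 2)) ^ k := by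
      rw [show ((1 : ℝ) / 2 + 1) * (k : ℝ) = (3 : ℝ) / 2 * (k : ℝ) by ring,
        Real.rpow_mul (le_of_lt hnpos), Real.rpow_natCast]
    rw [e2, ← mul_pow]
    have hbase : α * (n : ℝ) ^ ((3 : ℝ) / 2) ≤ 2 * (G.edgeFinset.card : ℝ) := by
      rw [← edge_ncard] at *
      have h1 : (0 : ℝ) ≤ (G.edgeSet.ncard : ℝ) := by positivity
      linarith [hedge]
    have h0 : (0 : ℝ) ≤ α * (n : ℝ) ^ ((3 : ℝ) / 2) := by
      have : (0 : ℝ) ≤ (n : ℝ) ^ ((3 : ℝ) / 2) := Real.rpow_nonneg (le_of_lt hnpos) _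
      nlinarith
    exact pow_le_pow_left₀ h0 hbase k
  | succ ℓ hℓ1 IH =>
    intro hℓt'
    obtain ⟨m, rfl⟩ : ∃ m, ℓ = m + 1 := ⟨ℓ - 1, by omega⟩
    obtain ⟨s, hs1, hsb⟩ := IH (by omega)
    obtain ⟨σ, hσ1, hext⟩ :=
      extension G t k n α ht hα hk hn hcard hexp (m + 1) (by omega) (by omega) s
    simp only [Nat.add_sub_cancel] at hext
    set s' := Function.update s m σ with hs'
    have heq : Lad G k (m + 1) α s' = Lad G k (m + 1) α s := by
      refine lad_congr G k (m + 1) α s' s (fun i hi => ?_)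
      rw [hs', Function.update_of_ne (by omega : i ≠ m)]
    refine ⟨s', fun i => ?_, ?_⟩
    · by_cases h : i = m
      · subst h; rw [hs', Function.update_self]; exact hσ1
      · rw [hs', Function.update_of_ne h]; exact hs1 i
    · have e1 : α ^ ((m + 1 + 1) * k) = α ^ ((m + 1) * k) * α ^ k := by
        rw [add_mul, pow_add, one_mul]
      have e2 : (n : ℝ) ^ (((((m + 1 + 1) : ℕ) : ℝ) / 2 + 1) * (k : ℝ))
          = (n : ℝ) ^ (((((m + 1) : ℕ) : ℝ) / 2 + 1) * (k : ℝ))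
            * ((n : ℝ) ^ ((1 : ℝ) / 2)) ^ k := by
        rw [show ((((m + 1 + 1) : ℕ) : ℝ) / 2 + 1) * (k : ℝ)
            = ((((m + 1) : ℕ) : ℝ) / 2 + 1) * (k : ℝ) + (1 : ℝ) / 2 * (k : ℝ) by
          push_cast; ring]
        rw [Real.rpow_add hnpos]
        congr 1
        rw [Real.rpow_mul (le_of_lt hnpos), Real.rpow_natCast]
      have e3 : (∏ i ∈ range (m + 1 + 1 - 1), s' i) = (∏ i ∈ range (m + 1 - 1), s i) * σ := by
        simp only [Nat.add_sub_cancel]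
        rw [Finset.prod_range_succ, hs', Function.update_self]
        congr 1
        refine Finset.prod_congr rfl (fun i hi => ?_)
        rw [Function.update_of_ne (by simp at hi; omega : i ≠ m)]
      have e4 : ((4 : ℝ) ^ (k + 1) * Real.logb 2 ((n : ℝ) ^ k)) ^ (m + 1 + 1 - 1)
          = ((4 : ℝ) ^ (k + 1) * Real.logb 2 ((n : ℝ) ^ k)) ^ (m + 1 - 1)
            * ((4 : ℝ) ^ (k + 1) * Real.logb 2 ((n : ℝ) ^ k)) := by
        simp only [Nat.add_sub_cancel]
        rw [pow_succ]
      have hα0 : (0 : ℝ) ≤ α := by linarith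
      have hfac : (0 : ℝ) ≤ (α * (n : ℝ) ^ ((1 : ℝ) / 2)) ^ k * σ /
          (4 ^ (k + 1) * Real.logb 2 ((n : ℝ) ^ k)) := by
        apply div_nonneg _ (le_of_lt hD0)
        apply mul_nonneg _ (by linarith)
        apply pow_nonneg
        have : (0 : ℝ) ≤ (n : ℝ) ^ ((1 : ℝ) / 2) := Real.rpow_nonneg (le_of_lt hnpos) _
        nlinarith
      calc α ^ ((m + 1 + 1) * k) * (n : ℝ) ^ (((((m + 1 + 1) : ℕ) : ℝ) / 2 + 1) * (k : ℝ))
            * (∏ i ∈ range (m + 1 + 1 - 1), s' i) /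
            (4 ^ (k + 1) * Real.logb 2 ((n : ℝ) ^ k)) ^ (m + 1 + 1 - 1)
          = (α ^ ((m + 1) * k) * (n : ℝ) ^ (((((m + 1) : ℕ) : ℝ) / 2 + 1) * (k : ℝ))
              * (∏ i ∈ range (m + 1 - 1), s i) /
              (4 ^ (k + 1) * Real.logb 2 ((n : ℝ) ^ k)) ^ (m + 1 - 1))
            * ((α * (n : ℝ) ^ ((1 : ℝ) / 2)) ^ k * σ /
              (4 ^ (k + 1) * Real.logb 2 ((n : ℝ) ^ k))) := by
            rw [e1, e2, e3, e4, mul_pow]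
            ring
      _ ≤ ((Lad G k (m + 1) α s).card : ℝ)
            * ((α * (n : ℝ) ^ ((1 : ℝ) / 2)) ^ k * σ /
              (4 ^ (k + 1) * Real.logb 2 ((n : ℝ) ^ k))) :=
            mul_le_mul_of_nonneg_right hsb hfac
      _ = ((Lad G k (m + 1) α s').card : ℝ)
            * ((α * (n : ℝ) ^ ((1 : ℝ) / 2)) ^ k * σ /
              (4 ^ (k + 1) * Real.logb 2 ((n : ℝ) ^ k))) := by rw [heq]
      _ ≤ ((Lad G k (m + 1 + 1) α s').card : ℝ) := by
            rw [heq]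
            exact hext

end MGL

theorem many_good_ladders (t : ℕ) (ht : 2 ≤ t) (α : ℝ) (hα : 4 * t ≤ α)
    (k : ℕ) (hk : 0 < k) :
    ∃ N : ℕ, ∀ n : ℕ, N ≤ n → ∀ (V : Type) (_ : Fintype V),
      Fintype.card V = n → ∀ G : SimpleGraph V,
        α * (n : ℝ) ^ ((3 : ℝ) / 2) ≤ (G.edgeSet.ncard : ℝ) →
        (∀ v : V, ((G.neighborSet v).ncard : ℝ) ≤ 12000 * α * (n : ℝ) ^ ((1 : ℝ) / 2)) →
        (∀ u v : V, G.Adj u v →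
          α * (n : ℝ) ^ ((1 : ℝ) / 2) ≤
            (({w : V | G.Adj u w ∧ α ≤ (codeg G v w : ℝ)}).ncard : ℝ)) →
        ∃ s : ℕ → ℝ, (∀ i, i < t - 1 → 1 ≤ s i) ∧
          α ^ (t * k) * (n : ℝ) ^ (((t : ℝ) / 2 + 1) * k) * (∏ i ∈ range (t - 1), s i) /
              (4 ^ (k + 1) * Real.logb 2 ((n : ℝ) ^ k)) ^ (t - 1) ≤
            (Nat.card {p : (Fin t → (Fin k → V)) × (Fin t → (Fin k → V)) //
              IsGoodLadder G k t α s p.1 p.2} : ℝ) := by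
  refine ⟨2, ?_⟩
  intro n hn V instV hcard G hedge _hdeg hexp
  obtain ⟨s, hs1, hsb⟩ := MGL.key G t k n α ht hα hk hn hcard hedge hexp t (by omega) le_rfl
  refine ⟨s, fun i _ => hs1 i, ?_⟩
  have hcount : (Nat.card {p : (Fin t → (Fin k → V)) × (Fin t → (Fin k → V)) //
      IsGoodLadder G k t α s p.1 p.2}) = (MGL.Lad G k t α s).card := by
    rw [Nat.card_eq_fintype_card, MGL.Lad]
    exact Fintype.card_subtype _
  rw [hcount]
  exact hsb
end
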